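/- arXiv:1507.00492 — 10 statements merged into one kernel-verified Lean document; each statement's English description precedes it below -/
import Mathlib

section
/- Let A be a positive N×N matrix (all entries strictly positive), u a positive vector, and λ a real number such that Au ≤ λu componentwise and Au ≠ λu. Then the spectral radius of A is strictly less than λ. -/
open Matrix Polynomial

/-- Spectral radius of a real square matrix: the maximum modulus of its
(complex) eigenvalues, i.e. of the roots of the characteristic polynomial of
its complexification. -/
noncomputable def specRad {N : ℕ} (A : Matrix (Fin N) (Fin N) ℝ) : ℝ :=
  sSup {r : ℝ | ∃ μ : ℂ, (A.map Complex.ofReal).charpoly.IsRoot μ ∧ r = ‖μ‖}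


lemma exists_eigvec_of_isRoot {N : ℕ} (B : Matrix (Fin N) (Fin N) ℂ) (μ : ℂ)
    (h : B.charpoly.IsRoot μ) : ∃ x : Fin N → ℂ, x ≠ 0 ∧ B.mulVec x = μ • x := by
  have hdet : (μ • (1 : Matrix (Fin N) (Fin N) ℂ) - B).det = 0 := by
    have : (μ • (1 : Matrix (Fin N) (Fin N) ℂ) - B) = (charmatrix B).map (evalRingHom μ) := by
      ext i j
      by_cases hij : i = j <;>
        simp [hij, charmatrix_apply, Matrix.one_apply, Matrix.diagonal_apply]
    rw [this, ← RingHom.mapMatrix_apply, ← RingHom.map_det]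
    simpa [Matrix.charpoly] using h
  obtain ⟨x, hx0, hx⟩ := (Matrix.exists_mulVec_eq_zero_iff).2 hdet
  refine ⟨x, hx0, ?_⟩
  rw [Matrix.sub_mulVec, sub_eq_zero] at hx
  rw [← hx, Matrix.smul_mulVec, Matrix.one_mulVec]

theorem stmt_0 {N : ℕ} (A : Matrix (Fin N) (Fin N) ℝ) (u : Fin N → ℝ) (lam : ℝ)
    (hA : ∀ i j, 0 < A i j) (hu : ∀ i, 0 < u i)
    (hle : A.mulVec u ≤ lam • u) (hne : A.mulVec u ≠ lam • u) :
    specRad A < lam := by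
  have hN : 0 < N := by
    rcases Nat.eq_zero_or_pos N with h | h
    · subst h; exact absurd (_root_.funext fun i => i.elim0) hne
    · exact h
  have hNe : Nonempty (Fin N) := Fin.pos_iff_nonempty.mp hN
  set v := A.mulVec u with hv
  have hmv : ∀ (w : Fin N → ℝ) i, A.mulVec w i = ∑ j, A i j * w j := by
    intro w i; simp [Matrix.mulVec, dotProduct]
  have hv_pos : ∀ i, 0 < v i := by
    intro i
    rw [hv, hmv]
    exact Finset.sum_pos (fun j _ => mul_pos (hA i j) (hu j)) Finset.univ_nonempty
  have hw : ∀ j, 0 ≤ lam * u j - v j := by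
    intro j; have := hle j; simp only [Pi.smul_apply, smul_eq_mul] at this
    exact sub_nonneg.2 this
  have hwne : ∃ j0, 0 < lam * u j0 - v j0 := by
    by_contra h; push_neg at h
    apply hne; funext j
    have h1 := hw j; have h2 := h j
    have : lam * u j - v j = 0 := le_antisymm h2 h1
    simp only [Pi.smul_apply, smul_eq_mul]
    linarith
  obtain ⟨j0, hj0⟩ := hwne
  -- strict inequality for v
  have hstrict : ∀ i, A.mulVec v i < lam * v i := by
    intro i
    have hpos : 0 < ∑ j, A i j * (lam * u j - v j) := by
      refine Finset.sum_pos' (fun j _ => mul_nonneg (hA i j).le (hw j)) ⟨j0, Finset.mem_univ _, mul_pos (hA i j0) hj0⟩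
    have heq : ∑ j, A i j * (lam * u j - v j) = lam * v i - A.mulVec v i := by
      rw [hmv v i]
      rw [hv, hmv u i, Finset.mul_sum]
      rw [← Finset.sum_sub_distrib]
      congr 1; funext j; ring
    linarith [heq ▸ hpos]
  -- the intermediate bound
  set lam' := Finset.univ.sup' Finset.univ_nonempty (fun i => A.mulVec v i / v i) with hlam'def
  have hlam' : lam' < lam := by
    rw [hlam'def, Finset.sup'_lt_iff]
    intro i _
    rw [div_lt_iff₀ (hv_pos i)]
    exact hstrict i
  have hbound : ∀ i, A.mulVec v i ≤ lam' * v i := by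
    intro i
    have := Finset.le_sup' (fun i => A.mulVec v i / v i) (Finset.mem_univ i)
    rwa [div_le_iff₀ (hv_pos i)] at this
  -- the eigenvalue set
  set S := {r : ℝ | ∃ μ : ℂ, (A.map Complex.ofReal).charpoly.IsRoot μ ∧ r = ‖μ‖} with hS
  set B := A.map Complex.ofReal with hB
  have hSne : S.Nonempty := by
    have hdeg : B.charpoly.natDegree = N := by
      rw [Matrix.charpoly_natDegree_eq_dim, Fintype.card_fin]
    have : 0 < B.charpoly.degree := by
      rw [← Polynomial.natDegree_pos_iff_degree_pos, hdeg]; exact hN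
    obtain ⟨μ, hμ⟩ := Complex.exists_root this
    exact ⟨‖μ‖, μ, hμ, rfl⟩
  have hub : ∀ r ∈ S, r ≤ lam' := by
    rintro r ⟨μ, hroot, rfl⟩
    obtain ⟨x, hx0, hx⟩ := exists_eigvec_of_isRoot B μ hroot
    obtain ⟨i, _, hi⟩ := Finset.exists_mem_eq_sup' (Finset.univ_nonempty (α := Fin N))
      (fun j => ‖x j‖ / v j)
    set c := ‖x i‖ / v i with hc
    have hsup : ∀ j, ‖x j‖ / v j ≤ c := by
      intro j
      rw [← hi]
      exact Finset.le_sup' (fun j => ‖x j‖ / v j) (Finset.mem_univ j)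
    have hcpos : 0 < c := by
      obtain ⟨j, hj⟩ := Function.ne_iff.mp hx0
      have : 0 < ‖x j‖ / v j :=
        div_pos (by simpa using hj) (hv_pos j)
      exact lt_of_lt_of_le this (hsup j)
    have hxle : ∀ j, ‖x j‖ ≤ c * v j := by
      intro j
      have := hsup j
      rwa [div_le_iff₀ (hv_pos j)] at this
    have hxi : ‖x i‖ = c * v i := by
      rw [hc, div_mul_cancel₀ _ (hv_pos i).ne']
    have hBabs : ∀ j, ‖B i j‖ = A i j := by
      intro j
      rw [hB, Matrix.map_apply, Complex.norm_real, Real.norm_eq_abs, abs_of_pos (hA i j)]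
    have h1 : ‖μ‖ * ‖x i‖ = ‖(B.mulVec x) i‖ := by
      rw [hx]; simp [norm_mul]
    have h2 : ‖(B.mulVec x) i‖ ≤ ∑ j, A i j * ‖x j‖ := by
      rw [show (B.mulVec x) i = ∑ j, B i j * x j by simp [Matrix.mulVec, dotProduct]]
      refine (norm_sum_le _ _).trans_eq ?_
      exact Finset.sum_congr rfl fun j _ => by rw [norm_mul, hBabs j]
    have h3 : ∑ j, A i j * ‖x j‖ ≤ c * (lam' * v i) := by
      calc ∑ j, A i j * ‖x j‖ ≤ ∑ j, A i j * (c * v j) :=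
            Finset.sum_le_sum fun j _ => mul_le_mul_of_nonneg_left (hxle j) (hA i j).le
        _ = c * (A.mulVec v i) := by
            rw [hmv v i, Finset.mul_sum]; exact Finset.sum_congr rfl fun j _ => by ring
        _ ≤ c * (lam' * v i) := mul_le_mul_of_nonneg_left (hbound i) hcpos.le
    have hfin : ‖μ‖ * (c * v i) ≤ c * (lam' * v i) := by
      rw [← hxi]; exact h1.trans_le (h2.trans h3)
    have hcv : 0 < c * v i := mul_pos hcpos (hv_pos i)
    nlinarith [hfin, hcv]
  have : sSup S ≤ lam' := csSup_le hSne hub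
  calc specRad A = sSup S := rfl
    _ ≤ lam' := this
    _ < lam := hlam'
end

section
/- Let 𝒜 ⊂ M(N,M) be an IRU-set of matrices (every matrix obtained by independently choosing each row i from a given set of rows 𝒜_i), and suppose Ãu = v for some matrix à ∈ 𝒜 and vectors u, v. Then either Au ≥ v componentwise for all A ∈ 𝒜, or there exists Ā ∈ 𝒜 with Āu ≤ v and Āu ≠ v. -/
open Matrix

/-- An independent row uncertainty (IRU) set of matrices: the set of all
matrices whose `i`-th row belongs to a prescribed set of rows `rows i`. -/
def IsIRU {N M : ℕ} (S : Set (Matrix (Fin N) (Fin M) ℝ)) : Prop :=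
  ∃ rows : Fin N → Set (Fin M → ℝ), S = {A | ∀ i, A i ∈ rows i}

theorem stmt_4 {N M : ℕ} (S : Set (Matrix (Fin N) (Fin M) ℝ)) (hS : IsIRU S)
    (A₀ : Matrix (Fin N) (Fin M) ℝ) (hA₀ : A₀ ∈ S)
    (u : Fin M → ℝ) (v : Fin N → ℝ) (h : A₀.mulVec u = v) :
    (∀ A ∈ S, v ≤ A.mulVec u) ∨ ∃ B ∈ S, B.mulVec u ≤ v ∧ B.mulVec u ≠ v := by
  obtain ⟨rows, rfl⟩ := hS
  by_cases hall : ∀ A ∈ {A : Matrix (Fin N) (Fin M) ℝ | ∀ i, A i ∈ rows i}, v ≤ A.mulVec u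
  · exact Or.inl hall
  · right
    push_neg at hall
    obtain ⟨A, hA, hAv⟩ := hall
    rw [Pi.le_def] at hAv
    push_neg at hAv
    obtain ⟨i, hi⟩ := hAv
    refine ⟨fun j => if j = i then A j else A₀ j, fun j => ?_, ?_, ?_⟩
    · by_cases hji : j = i
      · simp only []; rw [if_pos hji, hji]; exact hA i
      · simpa [hji] using hA₀ j
    · intro j
      by_cases hji : j = i
      · subst hji
        simpa [mulVec, dotProduct] using le_of_lt hi
      · simp only [mulVec, dotProduct, if_neg hji]
        rw [← h]; exact le_of_eq rfl
    · intro hc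
      have := congrFun hc i
      simp only [mulVec, dotProduct, if_pos rfl, if_true] at this
      have hi' : (A.mulVec u) i < v i := hi
      simp [mulVec, dotProduct] at hi'
      linarith
end

section
/- Let 𝒜 ⊂ M(N,M) be an IRU-set of matrices, and suppose Ãu = v for some à ∈ 𝒜 and vectors u, v. Then either Au ≤ v componentwise for all A ∈ 𝒜, or there exists Ā ∈ 𝒜 with Āu ≥ v and Āu ≠ v. -/
open Matrix

theorem stmt_5 {N M : ℕ} (S : Set (Matrix (Fin N) (Fin M) ℝ)) (hS : IsIRU S)
    (A₀ : Matrix (Fin N) (Fin M) ℝ) (hA₀ : A₀ ∈ S)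
    (u : Fin M → ℝ) (v : Fin N → ℝ) (h : A₀.mulVec u = v) :
    (∀ A ∈ S, A.mulVec u ≤ v) ∨ ∃ B ∈ S, v ≤ B.mulVec u ∧ B.mulVec u ≠ v := by
  by_cases hall : ∀ A ∈ S, A.mulVec u ≤ v
  · exact Or.inl hall
  · right
    push_neg at hall
    obtain ⟨A, hA, hAu⟩ := hall
    rw [Pi.le_def] at hAu
    push_neg at hAu
    obtain ⟨i, hi⟩ := hAu
    obtain ⟨rows, rfl⟩ := hS
    refine ⟨Function.update A₀ i (A i), ?_, ?_, ?_⟩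
    · intro j
      by_cases hj : j = i
      · subst hj; simpa [show Function.update A₀ j (A j) j = A j from Function.update_self _ _ _] using hA j
      · simpa [show Function.update A₀ i (A i) j = A₀ j from Function.update_of_ne hj _ _] using hA₀ j
    · intro j
      by_cases hj : j = i
      · subst hj
        simp only [mulVec, show Function.update A₀ j (A j) j = A j from Function.update_self _ _ _]
        exact le_of_lt hi
      · simp only [mulVec, show Function.update A₀ i (A i) j = A₀ j from Function.update_of_ne hj _ _]
        exact le_of_eq (congrFun h.symm j)
    · intro heq
      have := congrFun heq i
      simp only [mulVec, show Function.update A₀ i (A i) i = A i from Function.update_self _ _ _] at this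
      exact absurd this (ne_of_gt hi)
end

section
/- Let 𝒜 be a compact IRU-set of strictly positive N×N matrices. If à ∈ 𝒜 attains the minimum spectral radius ρ(Ã) = min_{A∈𝒜} ρ(A), and ṽ > 0 is a Perron eigenvector of à with Ãṽ = ρ(Ã)ṽ, then Aṽ ≥ ρ(Ã)ṽ componentwise for every A ∈ 𝒜. -/
open Matrix Polynomial

lemma eval_charpoly' {N : ℕ} (M : Matrix (Fin N) (Fin N) ℂ) (μ : ℂ) :
    M.charpoly.eval μ = (Matrix.diagonal (fun _ => μ) - M).det := by
  rw [Matrix.charpoly, ← Polynomial.coe_evalRingHom, RingHom.map_det]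
  congr 1
  ext i j
  by_cases h : i = j <;>
    simp [Matrix.charmatrix_apply, Matrix.diagonal_apply, h]

lemma root_eigen {N : ℕ} (M : Matrix (Fin N) (Fin N) ℂ) (μ : ℂ)
    (h : M.charpoly.IsRoot μ) : ∃ x ≠ 0, M.mulVec x = μ • x := by
  rw [Polynomial.IsRoot, eval_charpoly'] at h
  obtain ⟨x, hx, hx0⟩ := (Matrix.exists_mulVec_eq_zero_iff).2 h
  refine ⟨x, hx, ?_⟩
  have := hx0
  rw [Matrix.sub_mulVec, sub_eq_zero] at this
  rw [← this]
  ext i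
  simp [Matrix.mulVec_diagonal]

lemma abs_bound {N : ℕ} (M : Matrix (Fin N) (Fin N) ℝ) (hM : ∀ i j, 0 ≤ M i j)
    (v : Fin N → ℝ) (hv : ∀ i, 0 < v i) (c : ℝ)
    (hMv : ∀ j, M.mulVec v j ≤ c * v j) (μ : ℂ) (x : Fin N → ℂ) (hx : x ≠ 0)
    (hex : (M.map Complex.ofReal).mulVec x = μ • x) : ‖μ‖ ≤ c := by
  -- argmax of |x j| / v j
  obtain ⟨k, hk⟩ : ∃ k, x k ≠ 0 := by
    by_contra h; push_neg at h; exact hx (funext h)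
  have hne : (Finset.univ : Finset (Fin N)).Nonempty := ⟨k, Finset.mem_univ k⟩
  obtain ⟨j₀, -, hj₀⟩ := Finset.exists_max_image Finset.univ
    (fun j => ‖x j‖ / v j) hne
  set t : ℝ := ‖x j₀‖ / v j₀ with ht
  have htpos : 0 < t := by
    have h1 : ‖x k‖ / v k ≤ t := hj₀ k (Finset.mem_univ k)
    have h2 : 0 < ‖x k‖ / v k :=
      div_pos (by simpa using hk) (hv k)
    linarith
  have hle : ∀ j, ‖x j‖ ≤ t * v j := by
    intro j
    have := hj₀ j (Finset.mem_univ j)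
    calc ‖x j‖ = ‖x j‖ / v j * v j := by
          rw [div_mul_cancel₀ _ (hv j).ne']
      _ ≤ t * v j := mul_le_mul_of_nonneg_right this (hv j).le
  have heq : ‖x j₀‖ = t * v j₀ := by
    rw [ht, div_mul_cancel₀ _ (hv j₀).ne']
  have key : ‖μ‖ * ‖x j₀‖ ≤ c * (t * v j₀) := by
    rw [← norm_mul]
    have hμx : μ * x j₀ = ((M.map Complex.ofReal).mulVec x) j₀ := by
      rw [hex]; simp [Pi.smul_apply, smul_eq_mul]
    rw [hμx]
    have h1 : ‖((M.map Complex.ofReal).mulVec x) j₀‖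
        ≤ ∑ l, M j₀ l * ‖x l‖ := by
      rw [Matrix.mulVec, dotProduct]
      refine le_trans (norm_sum_le _ _) ?_
      refine Finset.sum_le_sum fun l _ => ?_
      simp [Matrix.map_apply, norm_mul, Complex.norm_real, abs_of_nonneg (hM j₀ l)]
    refine h1.trans ?_
    have h2 : ∑ l, M j₀ l * ‖x l‖ ≤ ∑ l, M j₀ l * (t * v l) :=
      Finset.sum_le_sum fun l _ => mul_le_mul_of_nonneg_left (hle l) (hM j₀ l)
    refine h2.trans ?_
    have h3 : ∑ l, M j₀ l * (t * v l) = t * (M.mulVec v j₀) := by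
      rw [Matrix.mulVec, dotProduct, Finset.mul_sum]
      exact Finset.sum_congr rfl fun l _ => by ring
    rw [h3]
    calc t * (M.mulVec v j₀) ≤ t * (c * v j₀) :=
          mul_le_mul_of_nonneg_left (hMv j₀) htpos.le
      _ = c * (t * v j₀) := by ring
  rw [heq] at key
  have hpos : 0 < t * v j₀ := mul_pos htpos (hv j₀)
  exact le_of_mul_le_mul_right (by linarith [key]) hpos


theorem stmt_6 {N : ℕ} (S : Set (Matrix (Fin N) (Fin N) ℝ)) (hS : IsIRU S)
    (hcomp : IsCompact S) (hpos : ∀ A ∈ S, ∀ i j, 0 < A i j)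
    (A₀ : Matrix (Fin N) (Fin N) ℝ) (hA₀ : A₀ ∈ S)
    (hmin : ∀ A ∈ S, specRad A₀ ≤ specRad A)
    (v : Fin N → ℝ) (hv : ∀ i, 0 < v i)
    (heig : A₀.mulVec v = specRad A₀ • v) :
    ∀ A ∈ S, specRad A₀ • v ≤ A.mulVec v := by
  intro A hA
  by_contra hcon
  rw [Pi.le_def] at hcon
  push_neg at hcon
  obtain ⟨i, hi⟩ := hcon
  set ρ := specRad A₀ with hρ
  obtain ⟨rows, hrows⟩ := hS
  set B := A₀.updateRow i (A i) with hB
  have hBS : B ∈ S := by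
    rw [hrows]
    intro j
    by_cases h : j = i
    · rw [h, hB, Matrix.updateRow_self]
      exact (hrows ▸ hA) i
    · rw [hB, Matrix.updateRow_ne h]
      exact (hrows ▸ hA₀) j
  have hA₀pos := hpos A₀ hA₀
  have hApos := hpos A hA
  have hBpos := hpos B hBS
  have huniv : (Finset.univ : Finset (Fin N)).Nonempty := ⟨i, Finset.mem_univ i⟩
  have hρpos : 0 < ρ := by
    have h1 : A₀.mulVec v i = ρ * v i := by rw [heig]; simp
    have h2 : 0 < A₀.mulVec v i := by
      rw [Matrix.mulVec, dotProduct]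
      exact Finset.sum_pos (fun j _ => mul_pos (hA₀pos i j) (hv j)) huniv
    nlinarith [hv i]
  -- B v ≤ ρ v, strict at i
  have hBvi : B.mulVec v i < ρ * v i := by
    have : B.mulVec v i = A.mulVec v i := by
      rw [Matrix.mulVec, Matrix.mulVec, hB]
      congr 1
      rw [Matrix.updateRow_self]
    rw [this]
    simpa using hi
  have hBvj : ∀ j, j ≠ i → B.mulVec v j = ρ * v j := by
    intro j hj
    have : B.mulVec v j = A₀.mulVec v j := by
      rw [Matrix.mulVec, Matrix.mulVec, hB]
      congr 1
      rw [Matrix.updateRow_ne hj]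
    rw [this, heig]; simp
  have hBv : ∀ j, B.mulVec v j ≤ ρ * v j := by
    intro j
    by_cases h : j = i
    · subst h; exact hBvi.le
    · exact (hBvj j h).le
  -- M = B * B satisfies M v < ρ² v strictly
  set M := B * B with hM
  have hMnn : ∀ j k, 0 ≤ M j k := by
    intro j k
    rw [hM, Matrix.mul_apply]
    exact Finset.sum_nonneg fun l _ => mul_nonneg (hBpos j l).le (hBpos l k).le
  have hMv : ∀ j, M.mulVec v j < ρ ^ 2 * v j := by
    intro j
    have h1 : M.mulVec v j = ∑ k, B j k * (B.mulVec v k) := by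
      rw [hM, ← Matrix.mulVec_mulVec, Matrix.mulVec, dotProduct]
    rw [h1]
    have h2 : ∑ k, B j k * (B.mulVec v k) < ∑ k, B j k * (ρ * v k) := by
      refine Finset.sum_lt_sum (fun k _ => mul_le_mul_of_nonneg_left (hBv k) (hBpos j k).le)
        ⟨i, Finset.mem_univ i, mul_lt_mul_of_pos_left hBvi (hBpos j i)⟩
    refine h2.trans_le ?_
    have h3 : ∑ k, B j k * (ρ * v k) = ρ * B.mulVec v j := by
      rw [Matrix.mulVec, dotProduct, Finset.mul_sum]
      exact Finset.sum_congr rfl fun k _ => by ring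
    rw [h3, pow_two, mul_assoc]
    exact mul_le_mul_of_nonneg_left (hBv j) hρpos.le
  -- define c
  set c : ℝ := Finset.univ.sup' huniv (fun j => M.mulVec v j / v j) with hc
  have hclt : c < ρ ^ 2 := by
    rw [hc, Finset.sup'_lt_iff]
    exact fun j _ => (div_lt_iff₀ (hv j)).2 (by linarith [hMv j])
  have hc0 : (0:ℝ) ≤ c := by
    refine le_trans ?_ (Finset.le_sup' (fun j => M.mulVec v j / v j) (Finset.mem_univ i))
    refine div_nonneg ?_ (hv i).le
    rw [Matrix.mulVec, dotProduct]
    exact Finset.sum_nonneg fun l _ => mul_nonneg (hMnn i l) (hv l).le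
  have hcb : ∀ j, M.mulVec v j ≤ c * v j := by
    intro j
    have := Finset.le_sup' (fun j => M.mulVec v j / v j) (Finset.mem_univ j)
    calc M.mulVec v j = M.mulVec v j / v j * v j := by
          rw [div_mul_cancel₀ _ (hv j).ne']
      _ ≤ c * v j := mul_le_mul_of_nonneg_right this (hv j).le
  -- specRad B ≤ sqrt c
  have hsr : specRad B ≤ Real.sqrt c := by
    apply Real.sSup_le _ (Real.sqrt_nonneg c)
    rintro r ⟨μ, hroot, rfl⟩
    obtain ⟨x, hx, hex⟩ := root_eigen _ μ hroot
    have hMex : (M.map Complex.ofReal).mulVec x = (μ ^ 2) • x := by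
      have hmap : M.map Complex.ofReal
          = (B.map Complex.ofReal) * (B.map Complex.ofReal) := by
        rw [hM]
        exact Matrix.map_mul (f := Complex.ofRealHom)
      rw [hmap, ← Matrix.mulVec_mulVec, hex, Matrix.mulVec_smul, hex,
        smul_smul, ← pow_two]
    have habs : ‖μ ^ 2‖ ≤ c :=
      abs_bound M hMnn v hv c hcb (μ ^ 2) x hx hMex
    rw [norm_pow] at habs
    have h0 : (0:ℝ) ≤ ‖μ‖ := norm_nonneg _
    nlinarith [Real.sq_sqrt (le_trans (sq_nonneg _) habs : (0:ℝ) ≤ c),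
      Real.sqrt_nonneg c]
  have hlt : Real.sqrt c < ρ := by
    rw [show ρ = Real.sqrt (ρ ^ 2) by rw [Real.sqrt_sq hρpos.le]]
    exact Real.sqrt_lt_sqrt hc0 hclt
  have := hmin B hBS
  linarith
end

section
/- Let 𝒜 be a compact IRU-set of strictly positive N×N matrices. If à ∈ 𝒜 attains the maximum spectral radius ρ(Ã) = max_{A∈𝒜} ρ(A), and ṽ > 0 is a Perron eigenvector of à with Ãṽ = ρ(Ã)ṽ, then Aṽ ≤ ρ(Ã)ṽ componentwise for every A ∈ 𝒜. -/
open Matrix Polynomial Filter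
open scoped ENNReal NNReal


open Matrix

section Aux
attribute [local instance] Matrix.linftyOpNormedAddCommGroup Matrix.linftyOpNormedRing
  Matrix.linftyOpNormedAlgebra

local instance {N : ℕ} : CompleteSpace (Matrix (Fin N) (Fin N) ℂ) :=
  inferInstance

lemma mem_spectrum_iff' {N : ℕ} {M : Matrix (Fin N) (Fin N) ℂ} {z : ℂ} :
    z ∈ spectrum ℂ M ↔ M.charpoly.IsRoot z := by
  rw [spectrum.mem_iff, Matrix.isUnit_iff_isUnit_det, isUnit_iff_ne_zero, not_not]
  have h : (algebraMap ℂ (Matrix (Fin N) (Fin N) ℂ) z - M).det = M.charpoly.eval z := by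
    unfold Matrix.charpoly
    rw [← coe_evalRingHom, RingHom.map_det]
    congr 1
    ext i j
    by_cases hij : i = j
    · subst hij
      simp [charmatrix_apply, Matrix.algebraMap_matrix_apply]
    · simp [charmatrix_apply, Matrix.algebraMap_matrix_apply, hij]
  rw [h]
  exact Iff.rfl

lemma nnnorm_map_ofReal {N : ℕ} (A : Matrix (Fin N) (Fin N) ℝ) :
    ‖A.map Complex.ofReal‖₊ = ‖A‖₊ := by
  simp [Matrix.linfty_opNNNorm_def, Matrix.map_apply]

lemma le_specRad {N : ℕ} (i0 : Fin N) (B : Matrix (Fin N) (Fin N) ℝ)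
    (hB : ∀ i j, 0 ≤ B i j) (w : Fin N → ℝ) (hw : ∀ i, 0 < w i)
    {μ : ℝ} (hμ : 0 ≤ μ) (h : ∀ i, μ * w i ≤ B.mulVec w i) : μ ≤ specRad B := by
  classical
  haveI : Nonempty (Fin N) := ⟨i0⟩
  set M : Matrix (Fin N) (Fin N) ℂ := B.map Complex.ofReal with hM
  have hmv : ∀ (C : Matrix (Fin N) (Fin N) ℝ) (u : Fin N → ℝ) (j : Fin N),
      C.mulVec u j = ∑ k, C j k * u k := fun C u j => rfl
  have hBpow : ∀ n, ∀ i j, 0 ≤ (B ^ n) i j := by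
    intro n
    induction n with
    | zero =>
      intro i j
      rw [pow_zero]
      by_cases h' : i = j <;> simp [Matrix.one_apply, h']
    | succ n ih =>
      intro i j
      rw [pow_succ, Matrix.mul_apply]
      exact Finset.sum_nonneg fun k _ => mul_nonneg (ih i k) (hB k j)
  have hmono : ∀ n i, μ ^ n * w i ≤ (B ^ n).mulVec w i := by
    intro n
    induction n with
    | zero => intro i; simp [Matrix.one_mulVec]
    | succ n ih =>
      intro i
      calc μ ^ (n + 1) * w i = μ ^ n * (μ * w i) := by ring
        _ ≤ μ ^ n * (B.mulVec w i) :=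
            mul_le_mul_of_nonneg_left (h i) (pow_nonneg hμ n)
        _ = ∑ k, B i k * (μ ^ n * w k) := by
            rw [hmv, Finset.mul_sum]
            exact Finset.sum_congr rfl fun k _ => by ring
        _ ≤ ∑ k, B i k * ((B ^ n).mulVec w k) :=
            Finset.sum_le_sum fun k _ => mul_le_mul_of_nonneg_left (ih k) (hB i k)
        _ = B.mulVec ((B ^ n).mulVec w) i := (hmv _ _ _).symm
        _ = (B ^ (n + 1)).mulVec w i := by rw [Matrix.mulVec_mulVec, ← pow_succ']
  have hpi : ∀ (u : Fin N → ℝ) (j : Fin N), u j ≤ ‖u‖ := fun u j =>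
    (le_abs_self _).trans ((Real.norm_eq_abs _).symm.le.trans (norm_le_pi_norm u j))
  have hwnorm : 0 < ‖w‖ := lt_of_lt_of_le (hw i0) (hpi w i0)
  set c : ℝ := w i0 / ‖w‖ with hc
  have hcpos : 0 < c := div_pos (hw i0) hwnorm
  have hnorm : ∀ n, μ ^ n * c ≤ ‖B ^ n‖ := by
    intro n
    have h1 : μ ^ n * w i0 ≤ (B ^ n).mulVec w i0 := hmono n i0
    have h2 : (B ^ n).mulVec w i0 ≤ ‖(B ^ n).mulVec w‖ := hpi _ i0
    have h3 : ‖(B ^ n).mulVec w‖ ≤ ‖B ^ n‖ * ‖w‖ := Matrix.linfty_opNorm_mulVec _ _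
    have h4 : μ ^ n * w i0 ≤ ‖B ^ n‖ * ‖w‖ := h1.trans (h2.trans h3)
    rw [hc]
    calc μ ^ n * (w i0 / ‖w‖) = (μ ^ n * w i0) / ‖w‖ := by ring
      _ ≤ (‖B ^ n‖ * ‖w‖) / ‖w‖ := by gcongr
      _ = ‖B ^ n‖ := by field_simp
  have hMpow : ∀ n, M ^ n = (B ^ n).map Complex.ofReal := by
    intro n
    induction n with
    | zero =>
      rw [pow_zero, pow_zero, Matrix.map_one _ Complex.ofReal_zero Complex.ofReal_one]
    | succ n ih =>
      rw [pow_succ, pow_succ, ih]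
      ext i j
      simp [Matrix.map_apply, Matrix.mul_apply, hM]
  have hnormM : ∀ n, ‖M ^ n‖₊ = ‖B ^ n‖₊ := fun n => by
    rw [hMpow n]; exact nnnorm_map_ofReal _
  have hkey : ENNReal.ofReal μ ≤ spectralRadius ℂ M := by
    rcases eq_or_lt_of_le hμ with hμ0 | hμpos
    · simp [← hμ0]
    by_contra hcon
    push_neg at hcon
    obtain ⟨Q, hQ1, hQ2⟩ := ENNReal.lt_iff_exists_nnreal_btwn.mp hcon
    have hQμ : (Q : ℝ) < μ := by
      have := ENNReal.toReal_strict_mono (by simp) hQ2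
      rwa [ENNReal.coe_toReal, ENNReal.toReal_ofReal hμ] at this
    have hev1 : ∀ᶠ (n : ℕ) in atTop, (‖M ^ n‖₊ : ℝ≥0∞) ^ (1 / (n : ℝ)) < (Q : ℝ≥0∞) :=
      (spectrum.pow_nnnorm_pow_one_div_tendsto_nhds_spectralRadius M).eventually_lt_const hQ1
    have hev2 : ∀ᶠ (n : ℕ) in atTop, ((Q : ℝ) / μ) ^ n < c := by
      have hlt : (Q : ℝ) / μ < 1 := (div_lt_one hμpos).mpr hQμ
      have ht : Tendsto (fun n : ℕ => ((Q : ℝ) / μ) ^ n) atTop (nhds 0) :=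
        tendsto_pow_atTop_nhds_zero_of_lt_one (by positivity) hlt
      exact ht.eventually_lt_const hcpos
    obtain ⟨n, hn1, hn2, hn3⟩ := (hev1.and (hev2.and (eventually_ge_atTop 1))).exists
    have hn0 : (n : ℝ) ≠ 0 := by exact_mod_cast Nat.one_le_iff_ne_zero.mp hn3
    have hMn : (‖M ^ n‖₊ : ℝ≥0∞) ≤ (Q : ℝ≥0∞) ^ n := by
      have h5 := ENNReal.rpow_le_rpow hn1.le (Nat.cast_nonneg n : (0:ℝ) ≤ (n:ℝ))
      rwa [← ENNReal.rpow_mul, one_div, inv_mul_cancel₀ hn0, ENNReal.rpow_one,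
        ENNReal.rpow_natCast] at h5
    have hreal : ‖B ^ n‖ ≤ (Q : ℝ) ^ n := by
      rw [hnormM n, ← ENNReal.coe_pow, ENNReal.coe_le_coe] at hMn
      exact_mod_cast hMn
    have hcontr : μ ^ n * c ≤ (Q : ℝ) ^ n := (hnorm n).trans hreal
    have hlt2 : (Q : ℝ) ^ n < μ ^ n * c := by
      have hμn : 0 < μ ^ n := pow_pos hμpos n
      calc (Q : ℝ) ^ n = μ ^ n * ((Q : ℝ) / μ) ^ n := by
            rw [div_pow]; field_simp
        _ < μ ^ n * c := mul_lt_mul_of_pos_left hn2 hμn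
    linarith
  obtain ⟨z, hz, hznorm⟩ := spectrum.exists_nnnorm_eq_spectralRadius M
  have hroot : M.charpoly.IsRoot z := mem_spectrum_iff'.mp hz
  have hzμ : μ ≤ ‖z‖ := by
    have h6 : ENNReal.ofReal μ ≤ (‖z‖₊ : ℝ≥0∞) := hznorm ▸ hkey
    rw [← enorm_eq_nnnorm, ← ofReal_norm, ENNReal.ofReal_le_ofReal_iff (norm_nonneg _)] at h6
    exact h6
  have hfin : ({r : ℝ | ∃ μ : ℂ, (B.map Complex.ofReal).charpoly.IsRoot μ ∧
      r = ‖μ‖}).Finite := by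
    have h1 : {z : ℂ | (B.map Complex.ofReal).charpoly.IsRoot z}.Finite :=
      Polynomial.finite_setOf_isRoot (Matrix.charpoly_monic _).ne_zero
    have h2 : {r : ℝ | ∃ μ : ℂ, (B.map Complex.ofReal).charpoly.IsRoot μ ∧ r = ‖μ‖}
        = (fun z : ℂ => ‖z‖) '' {z : ℂ | (B.map Complex.ofReal).charpoly.IsRoot z} := by
      ext r
      simp only [Set.mem_setOf_eq, Set.mem_image, eq_comm]
    exact h2 ▸ h1.image _
  have hmem : ‖z‖ ∈ {r : ℝ | ∃ μ : ℂ,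
      (B.map Complex.ofReal).charpoly.IsRoot μ ∧ r = ‖μ‖} := ⟨z, hroot, rfl⟩
  exact hzμ.trans (le_csSup hfin.bddAbove hmem)

end Aux


theorem stmt_7 {N : ℕ} (S : Set (Matrix (Fin N) (Fin N) ℝ)) (hS : IsIRU S)
    (hcomp : IsCompact S) (hpos : ∀ A ∈ S, ∀ i j, 0 < A i j)
    (A₀ : Matrix (Fin N) (Fin N) ℝ) (hA₀ : A₀ ∈ S)
    (hmax : ∀ A ∈ S, specRad A ≤ specRad A₀)
    (v : Fin N → ℝ) (hv : ∀ i, 0 < v i)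
    (heig : A₀.mulVec v = specRad A₀ • v) :
    ∀ A ∈ S, A.mulVec v ≤ specRad A₀ • v := by
  classical
  intro A hA
  by_contra hcon
  rw [Pi.le_def] at hcon
  push_neg at hcon
  obtain ⟨i, hi⟩ := hcon
  set ρ := specRad A₀ with hρ
  have hmv : ∀ (C : Matrix (Fin N) (Fin N) ℝ) (u : Fin N → ℝ) (j : Fin N),
      C.mulVec u j = ∑ k, C j k * u k := fun C u j => rfl
  have hi' : ρ * v i < A.mulVec v i := by
    simpa [Pi.smul_apply, smul_eq_mul] using hi
  obtain ⟨rows, hrows⟩ := hS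
  set B := A₀.updateRow i (A i) with hB
  have hBS : B ∈ S := by
    rw [hrows] at hA hA₀ ⊢
    intro j
    by_cases hj : j = i
    · subst hj; rw [hB, Matrix.updateRow_self]; exact hA j
    · rw [hB, Matrix.updateRow_ne hj]; exact hA₀ j
  have hBpos : ∀ j k, 0 < B j k := hpos B hBS
  have hρpos : 0 < ρ := by
    have h1 : A₀.mulVec v i = ρ * v i := by rw [heig]; simp
    have h2 : 0 < A₀.mulVec v i := by
      rw [hmv]
      exact Finset.sum_pos (fun k _ => mul_pos (hpos A₀ hA₀ i k) (hv k))
        ⟨i, Finset.mem_univ i⟩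
    nlinarith [hv i]
  set w := B.mulVec v with hw
  have hwge : ∀ j, ρ * v j ≤ w j := by
    intro j
    by_cases hj : j = i
    · subst hj
      have hBi : B j = A j := by rw [hB]; exact Matrix.updateRow_self
      have : w j = A.mulVec v j := by rw [hw, hmv, hmv, hBi]
      rw [this]
      exact hi'.le
    · have hBj : B j = A₀ j := by rw [hB]; exact Matrix.updateRow_ne hj
      have : w j = A₀.mulVec v j := by rw [hw, hmv, hmv, hBj]
      rw [this, heig]
      simp
  have hwi : ρ * v i < w i := by
    have hBi : B i = A i := by rw [hB]; exact Matrix.updateRow_self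
    have : w i = A.mulVec v i := by rw [hw, hmv, hmv, hBi]
    rw [this]
    exact hi'
  have hwpos : ∀ j, 0 < w j := fun j =>
    lt_of_lt_of_le (mul_pos hρpos (hv j)) (hwge j)
  have hstrict : ∀ j, ρ * w j < B.mulVec w j := by
    intro j
    have e1 : ρ * w j = ∑ k, B j k * (ρ * v k) := by
      rw [hw, hmv, Finset.mul_sum]
      exact Finset.sum_congr rfl fun k _ => by ring
    rw [e1, hmv]
    exact Finset.sum_lt_sum (fun k _ => mul_le_mul_of_nonneg_left (hwge k) (hBpos j k).le)
      ⟨i, Finset.mem_univ i, mul_lt_mul_of_pos_left hwi (hBpos j i)⟩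
  have hne : (Finset.univ : Finset (Fin N)).Nonempty := ⟨i, Finset.mem_univ i⟩
  set μ' := Finset.univ.inf' hne (fun j => B.mulVec w j / w j) with hμ'
  have hρμ' : ρ < μ' := by
    rw [hμ', Finset.lt_inf'_iff]
    intro j _
    exact (lt_div_iff₀ (hwpos j)).mpr (hstrict j)
  have hμ'w : ∀ j, μ' * w j ≤ B.mulVec w j := fun j =>
    (le_div_iff₀ (hwpos j)).mp (Finset.inf'_le _ (Finset.mem_univ j))
  have hfinal : μ' ≤ specRad B :=
    le_specRad i B (fun a b => (hBpos a b).le) w hwpos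
      (le_of_lt (hρpos.trans hρμ')) hμ'w
  have hle := hmax B hBS
  linarith
end

section
/- Let 𝒜 be a compact IRU-set of strictly positive N×N matrices. Then for every n ≥ 1 and every choice of matrices A_1, …, A_n ∈ 𝒜, one has ρ(A_n ⋯ A_1) ≥ (min_{A∈𝒜} ρ(A))^n. -/
open Matrix

-- eval of charpoly
lemma my_eval_charpoly {n : ℕ} {R : Type*} [CommRing R] (M : Matrix (Fin n) (Fin n) R) (x : R) :
    M.charpoly.eval x = (Matrix.diagonal (fun _ => x) - M).det := by
  rw [Matrix.charpoly, ← Polynomial.coe_evalRingHom, RingHom.map_det]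
  congr 1
  ext i j
  by_cases h : i = j
  · subst h; simp [Matrix.charmatrix_apply_eq]
  · simp [Matrix.charmatrix_apply_ne _ _ _ h, Matrix.diagonal_apply_ne _ h]

lemma exists_eigvec_of_isRoot_s8 {n : ℕ} (M : Matrix (Fin n) (Fin n) ℂ) {μ : ℂ}
    (h : M.charpoly.IsRoot μ) : ∃ z : Fin n → ℂ, z ≠ 0 ∧ M *ᵥ z = μ • z := by
  have hdet : (Matrix.diagonal (fun _ => μ) - M).det = 0 := by
    rw [← my_eval_charpoly]; exact h
  obtain ⟨z, hz, hz2⟩ := (Matrix.exists_mulVec_eq_zero_iff).2 hdet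
  refine ⟨z, hz, ?_⟩
  have := hz2
  rw [Matrix.sub_mulVec] at this
  have hdiag : (Matrix.diagonal (fun _ => μ)) *ᵥ z = μ • z := by
    ext i; simp [Matrix.mulVec_diagonal]
  rw [hdiag] at this
  have := sub_eq_zero.mp this
  exact this.symm

lemma isRoot_map_of_eig {n : ℕ} (M : Matrix (Fin n) (Fin n) ℝ) {μ : ℝ} {u : Fin n → ℝ}
    (hu : u ≠ 0) (h : M *ᵥ u = μ • u) :
    (M.map Complex.ofReal).charpoly.IsRoot (μ : ℂ) := by
  have hdet : (Matrix.diagonal (fun _ => μ) - M).det = 0 := by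
    rw [← Matrix.exists_mulVec_eq_zero_iff]
    refine ⟨u, hu, ?_⟩
    rw [Matrix.sub_mulVec]
    have hdiag : (Matrix.diagonal (fun _ => μ)) *ᵥ u = μ • u := by
      ext i; simp [Matrix.mulVec_diagonal]
    rw [hdiag, h, sub_self]
  have hmap : (M.map Complex.ofReal) = M.map (Complex.ofRealHom : ℝ →+* ℂ) := rfl
  unfold Polynomial.IsRoot
  rw [hmap, Matrix.charpoly_map]
  have : (μ : ℂ) = Complex.ofRealHom μ := rfl
  rw [this, Polynomial.eval_map, Polynomial.eval₂_at_apply, my_eval_charpoly, hdet, map_zero]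

lemma specRad_nonneg {n : ℕ} (A : Matrix (Fin n) (Fin n) ℝ) : 0 ≤ specRad A := by
  apply Real.sSup_nonneg
  rintro r ⟨μ, _, rfl⟩
  exact norm_nonneg _

lemma specRad_eq_of_eig {n : ℕ} [NeZero n] (M : Matrix (Fin n) (Fin n) ℝ)
    (hM : ∀ i j, 0 ≤ M i j) {μ : ℝ} {u : Fin n → ℝ}
    (hu : ∀ i, 0 < u i) (heig : ∀ i, (M *ᵥ u) i = μ * u i) :
    specRad M = μ := by
  obtain ⟨i⟩ : Nonempty (Fin n) := inferInstance
  have hμ0 : 0 ≤ μ := by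
    have h1 : 0 ≤ (M *ᵥ u) i := by
      show 0 ≤ ∑ j, M i j * u j
      apply Finset.sum_nonneg
      intro j _
      exact mul_nonneg (hM i j) (hu j).le
    rw [heig i] at h1
    exact nonneg_of_mul_nonneg_left h1 (hu i)
  have key : ∀ r ∈ {r : ℝ | ∃ ν : ℂ, (M.map Complex.ofReal).charpoly.IsRoot ν ∧
      r = ‖ν‖}, r ≤ μ := by
    rintro r ⟨ν, hν, rfl⟩
    obtain ⟨z, hz, hzeig⟩ := exists_eigvec_of_isRoot_s8 _ hν
    obtain ⟨i0, hi0⟩ := Finite.exists_max (fun i => ‖z i‖ / u i)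
    set t := ‖z i0‖ / u i0 with ht_def
    have ht : ∀ j, ‖z j‖ ≤ t * u j := by
      intro j
      rw [← div_le_iff₀ (hu j)]
      exact hi0 j
    have ht0 : 0 < t := by
      obtain ⟨j, hj⟩ := Function.ne_iff.1 hz
      have : (0:ℝ) < ‖z j‖ / u j :=
        div_pos (norm_pos_iff.2 hj) (hu j)
      exact lt_of_lt_of_le this (hi0 j)
    have hzi0 : ‖z i0‖ = t * u i0 := by
      rw [ht_def, div_mul_cancel₀ _ (hu i0).ne']
    have hbound : ‖ν‖ * ‖z i0‖ ≤ μ * ‖z i0‖ := by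
      have h1 : ν * z i0 = ((M.map Complex.ofReal) *ᵥ z) i0 := by
        rw [hzeig]; simp
      have h2 : ‖ν * z i0‖ ≤ ∑ j, M i0 j * ‖z j‖ := by
        rw [h1]
        have hsum : ((M.map Complex.ofReal) *ᵥ z) i0
            = ∑ j, (Complex.ofReal (M i0 j)) * z j := rfl
        rw [hsum]
        refine le_trans (norm_sum_le _ _) ?_
        apply le_of_eq
        congr 1; ext j
        rw [norm_mul, Complex.norm_real, Real.norm_eq_abs, abs_of_nonneg (hM i0 j)]
      have h3 : ∑ j, M i0 j * ‖z j‖ ≤ t * (μ * u i0) := by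
        calc ∑ j, M i0 j * ‖z j‖
            ≤ ∑ j, M i0 j * (t * u j) := by
              apply Finset.sum_le_sum
              intro j _
              exact mul_le_mul_of_nonneg_left (ht j) (hM i0 j)
          _ = t * ∑ j, M i0 j * u j := by
              rw [Finset.mul_sum]; congr 1; ext j; ring
          _ = t * (μ * u i0) := by
              rw [← heig i0]; rfl
      rw [norm_mul] at h2
      calc ‖ν‖ * ‖z i0‖ ≤ t * (μ * u i0) := le_trans h2 h3
        _ = μ * (t * u i0) := by ring
        _ = μ * ‖z i0‖ := by rw [hzi0]
    have hzi0pos : 0 < ‖z i0‖ := by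
      rw [hzi0]; exact mul_pos ht0 (hu i0)
    exact le_of_mul_le_mul_right (by linarith [hbound]) hzi0pos
  apply le_antisymm
  · exact Real.sSup_le key hμ0
  · have hmem : μ ∈ {r : ℝ | ∃ ν : ℂ, (M.map Complex.ofReal).charpoly.IsRoot ν ∧
        r = ‖ν‖} := by
      refine ⟨(μ : ℂ), ?_, by rw [Complex.norm_real, Real.norm_eq_abs, abs_of_nonneg hμ0]⟩
      have hune : u ≠ 0 := fun h => (hu i).ne' (congrFun h i)
      have heq2 : M *ᵥ u = μ • u := funext fun j => by rw [heig j]; rfl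
      exact isRoot_map_of_eig M hune heq2
    exact le_csSup ⟨μ, key⟩ hmem

lemma exists_eig_pair {N : ℕ} [NeZero N] (R : Fin N → Set (Fin N → ℝ))
    (hRc : ∀ i, IsCompact (R i)) (hRne : ∀ i, (R i).Nonempty)
    (hRpos : ∀ i, ∀ a ∈ R i, ∀ j, 0 < a j) :
    ∃ (v : Fin N → ℝ) (lam : ℝ), (∀ i, 0 < v i) ∧ 0 < lam ∧
      (∀ i, ∀ a ∈ R i, lam * v i ≤ a ⬝ᵥ v) ∧ (∀ i, ∃ a ∈ R i, a ⬝ᵥ v = lam * v i) := by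
  have hNpos : 0 < (N : ℝ) := by exact_mod_cast Nat.pos_of_ne_zero (NeZero.ne N)
  obtain ⟨i⟩ : Nonempty (Fin N) := inferInstance
  set K := ⋃ j, R j with hK_def
  have hK : IsCompact K := isCompact_iUnion hRc
  have hKne : K.Nonempty := ⟨(hRne i).choose, Set.mem_iUnion.2 ⟨i, (hRne i).choose_spec⟩⟩
  have hKpos : ∀ a ∈ K, ∀ j, 0 < a j := by
    intro a ha j
    obtain ⟨k, hk⟩ := Set.mem_iUnion.1 ha
    exact hRpos k a hk j
  have hRK : ∀ j, R j ⊆ K := fun j => Set.subset_iUnion R j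
  -- upper bound Mb
  obtain ⟨C, hC⟩ := hK.isBounded.exists_norm_le
  set Mb := max C 1 with hMb_def
  have hMb0 : 0 < Mb := lt_of_lt_of_le one_pos (le_max_right _ _)
  have hMb : ∀ a ∈ K, ∀ j, a j ≤ Mb := by
    intro a ha j
    calc a j ≤ |a j| := le_abs_self _
      _ = ‖a j‖ := rfl
      _ ≤ ‖a‖ := norm_le_pi_norm a j
      _ ≤ C := hC a ha
      _ ≤ Mb := le_max_left _ _
  -- lower bound m
  have hmj : ∀ j : Fin N, ∃ mj, 0 < mj ∧ ∀ a ∈ K, mj ≤ a j := by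
    intro j
    obtain ⟨a0, ha0K, ha0min⟩ := hK.exists_isMinOn hKne (continuous_apply j).continuousOn
    exact ⟨a0 j, hKpos _ ha0K j, fun a ha => ha0min ha⟩
  choose mv hmv1 hmv2 using hmj
  set m := Finset.univ.inf' Finset.univ_nonempty mv with hm_def
  have hm0 : 0 < m := by
    rw [hm_def, Finset.lt_inf'_iff]
    exact fun j _ => hmv1 j
  have hmK : ∀ a ∈ K, ∀ j, m ≤ a j := fun a ha j =>
    le_trans (Finset.inf'_le mv (Finset.mem_univ j)) (hmv2 j a ha)
  have hmMb : m ≤ Mb := by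
    obtain ⟨a, ha⟩ := hKne
    exact le_trans (hmK a ha i) (hMb a ha i)
  -- the operator T
  set T : (Fin N → ℝ) → Fin N → ℝ := fun v i => sInf ((fun a => a ⬝ᵥ v) '' R i) with hT_def
  have hdotcont : ∀ v : Fin N → ℝ, Continuous (fun a : Fin N → ℝ => a ⬝ᵥ v) := by
    intro v
    apply continuous_finset_sum
    intro j _
    exact (continuous_apply j).mul continuous_const
  have Tmin : ∀ v (i : Fin N), ∃ a ∈ R i, a ⬝ᵥ v = T v i ∧ ∀ b ∈ R i, a ⬝ᵥ v ≤ b ⬝ᵥ v := by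
    intro v i
    obtain ⟨a, haR, hamin⟩ := (hRc i).exists_isMinOn (hRne i) (hdotcont v).continuousOn
    have hmin : ∀ b ∈ R i, a ⬝ᵥ v ≤ b ⬝ᵥ v := fun b hb => hamin hb
    refine ⟨a, haR, le_antisymm ?_ ?_, hmin⟩
    · apply le_csInf ((hRne i).image _)
      rintro x ⟨b, hb, rfl⟩
      exact hmin b hb
    · exact csInf_le ⟨a ⬝ᵥ v, by rintro x ⟨b, hb, rfl⟩; exact hmin b hb⟩ ⟨a, haR, rfl⟩
  have Tle : ∀ v (i : Fin N), ∀ a ∈ R i, T v i ≤ a ⬝ᵥ v := by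
    intro v i a ha
    obtain ⟨b, hb, hbe, hbmin⟩ := Tmin v i
    rw [← hbe]
    exact hbmin a ha
  have Tge : ∀ v (i : Fin N) (c : ℝ), (∀ a ∈ R i, c ≤ a ⬝ᵥ v) → c ≤ T v i := by
    intro v i c hc
    obtain ⟨b, hb, hbe, _⟩ := Tmin v i
    rw [← hbe]
    exact hc b hb
  -- bounds for dot products on the simplex
  have hdot_low : ∀ (v : Fin N → ℝ), (∀ j, 0 ≤ v j) → (∑ j, v j) = 1 →
      ∀ a ∈ K, m ≤ a ⬝ᵥ v := by
    intro v hv0 hv1 a ha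
    calc m = ∑ j, m * v j := by rw [← Finset.mul_sum, hv1, mul_one]
      _ ≤ ∑ j, a j * v j := by
          apply Finset.sum_le_sum
          intro j _
          exact mul_le_mul_of_nonneg_right (hmK a ha j) (hv0 j)
      _ = a ⬝ᵥ v := rfl
  have hdot_high : ∀ (v : Fin N → ℝ), (∀ j, 0 ≤ v j) → (∑ j, v j) = 1 →
      ∀ a ∈ K, a ⬝ᵥ v ≤ Mb := by
    intro v hv0 hv1 a ha
    calc a ⬝ᵥ v = ∑ j, a j * v j := rfl
      _ ≤ ∑ j, Mb * v j := by
          apply Finset.sum_le_sum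
          intro j _
          exact mul_le_mul_of_nonneg_right (hMb a ha j) (hv0 j)
      _ = Mb := by rw [← Finset.mul_sum, hv1, mul_one]
  have hT_low : ∀ (v : Fin N → ℝ), (∀ j, 0 ≤ v j) → (∑ j, v j) = 1 →
      ∀ i, m ≤ T v i := by
    intro v hv0 hv1 i
    exact Tge v i m (fun a ha => hdot_low v hv0 hv1 a (hRK i ha))
  have hT_high : ∀ (v : Fin N → ℝ), (∀ j, 0 ≤ v j) → (∑ j, v j) = 1 →
      ∀ i, T v i ≤ Mb := by
    intro v hv0 hv1 i
    obtain ⟨a, ha, hae, _⟩ := Tmin v i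
    rw [← hae]
    exact hdot_high v hv0 hv1 a (hRK i ha)
  -- homogeneity
  have Thom : ∀ (v : Fin N → ℝ) (c : ℝ), 0 < c → ∀ i, T (c • v) i = c * T v i := by
    intro v c hc i
    apply le_antisymm
    · obtain ⟨a, ha, hae, _⟩ := Tmin v i
      calc T (c • v) i ≤ a ⬝ᵥ (c • v) := Tle _ i a ha
        _ = c * (a ⬝ᵥ v) := by rw [dotProduct_smul]; rfl
        _ = c * T v i := by rw [hae]
    · obtain ⟨a, ha, hae, _⟩ := Tmin (c • v) i
      calc c * T v i ≤ c * (a ⬝ᵥ v) := by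
            exact mul_le_mul_of_nonneg_left (Tle v i a ha) hc.le
        _ = a ⬝ᵥ (c • v) := by rw [dotProduct_smul]; rfl
        _ = T (c • v) i := hae
  -- Lipschitz continuity of T
  have Tcont : ∀ i : Fin N, Continuous (fun v => T v i) := by
    intro i
    have hlip : ∀ v w : Fin N → ℝ, T v i ≤ T w i + (N * Mb) * dist v w := by
      intro v w
      obtain ⟨a, ha, hae, _⟩ := Tmin w i
      have haK := hRK i ha
      calc T v i ≤ a ⬝ᵥ v := Tle v i a ha
        _ = a ⬝ᵥ w + (a ⬝ᵥ v - a ⬝ᵥ w) := by ring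
        _ ≤ T w i + (N * Mb) * dist v w := by
            refine add_le_add (le_of_eq hae) ?_
            have : a ⬝ᵥ v - a ⬝ᵥ w = ∑ j, a j * (v j - w j) := by
              simp [dotProduct, Finset.sum_sub_distrib, mul_sub]
            rw [this]
            calc ∑ j, a j * (v j - w j) ≤ |∑ j, a j * (v j - w j)| := le_abs_self _
              _ ≤ ∑ j, |a j * (v j - w j)| := Finset.abs_sum_le_sum_abs _ _
              _ ≤ ∑ j, Mb * dist v w := by
                  apply Finset.sum_le_sum
                  intro j _
                  rw [abs_mul, abs_of_nonneg (hKpos a haK j).le]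
                  have h1 : |v j - w j| ≤ dist v w := by
                    rw [← Real.dist_eq]
                    exact dist_le_pi_dist v w j
                  exact mul_le_mul (hMb a haK j) h1 (abs_nonneg _) hMb0.le
              _ = (N * Mb) * dist v w := by
                  rw [Finset.sum_const, Finset.card_univ, Fintype.card_fin]
                  push_cast
                  ring
    have hlip2 : LipschitzWith (Real.toNNReal (N * Mb)) (fun v => T v i) := by
      apply LipschitzWith.of_dist_le_mul
      intro v w
      rw [Real.dist_eq, abs_sub_le_iff]
      constructor
      · have := hlip v w
        have h2 : Real.toNNReal (N * Mb) * dist v w = (N * Mb) * dist v w := by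
          rw [Real.coe_toNNReal _ (by positivity)]
        rw [h2]
        linarith
      · have := hlip w v
        have h2 : Real.toNNReal (N * Mb) * dist v w = (N * Mb) * dist w v := by
          rw [Real.coe_toNNReal _ (by positivity), dist_comm]
        rw [h2]
        linarith
    exact hlip2.continuous
  -- the compact simplex slice
  set δ := m / (N * Mb) with hδ_def
  have hδ0 : 0 < δ := div_pos hm0 (by positivity)
  set Δδ : Set (Fin N → ℝ) := {v | (∀ j, δ ≤ v j) ∧ ∑ j, v j = 1} with hΔ_def
  have hΔ_basic : ∀ v ∈ Δδ, (∀ j, 0 < v j) ∧ (∀ j, 0 ≤ v j) ∧ (∀ j, v j ≤ 1) := by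
    rintro v ⟨hv1, hv2⟩
    have hpos : ∀ j, 0 < v j := fun j => lt_of_lt_of_le hδ0 (hv1 j)
    refine ⟨hpos, fun j => (hpos j).le, fun j => ?_⟩
    rw [← hv2]
    exact Finset.single_le_sum (fun k _ => (hpos k).le) (Finset.mem_univ j)
  have hΔc : IsCompact Δδ := by
    rw [Metric.isCompact_iff_isClosed_bounded]
    constructor
    · have h1 : IsClosed {v : Fin N → ℝ | ∀ j, δ ≤ v j} := by
        have : {v : Fin N → ℝ | ∀ j, δ ≤ v j} = ⋂ j, {v | δ ≤ v j} := by
          ext v; simp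
        rw [this]
        exact isClosed_iInter fun j => isClosed_le continuous_const (continuous_apply j)
      have h2 : IsClosed {v : Fin N → ℝ | ∑ j, v j = 1} :=
        isClosed_eq (continuous_finset_sum _ fun j _ => continuous_apply j) continuous_const
      have : Δδ = {v : Fin N → ℝ | ∀ j, δ ≤ v j} ∩ {v : Fin N → ℝ | ∑ j, v j = 1} := rfl
      rw [this]
      exact h1.inter h2
    · rw [Metric.isBounded_iff_subset_closedBall 0]
      refine ⟨1, fun v hv => ?_⟩
      obtain ⟨hp, h0, h1⟩ := hΔ_basic v hv
      rw [Metric.mem_closedBall, dist_zero_right]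
      rw [pi_norm_le_iff_of_nonneg zero_le_one]
      intro j
      rw [Real.norm_eq_abs, abs_of_nonneg (h0 j)]
      exact h1 j
  have hΔne : Δδ.Nonempty := by
    refine ⟨fun _ => (N : ℝ)⁻¹, ⟨fun j => ?_, ?_⟩⟩
    · show δ ≤ (N:ℝ)⁻¹
      rw [hδ_def, div_le_iff₀ (by positivity)]
      have heq3 : (N:ℝ)⁻¹ * (↑N * Mb) = Mb := by field_simp
      rw [heq3]
      exact hmMb
    · rw [Finset.sum_const, Finset.card_univ, Fintype.card_fin, nsmul_eq_mul,
        mul_inv_cancel₀ hNpos.ne']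
  -- the function g
  set g : (Fin N → ℝ) → ℝ :=
    fun v => Finset.univ.inf' Finset.univ_nonempty (fun i => T v i / v i) with hg_def
  have hg_cont : ContinuousOn g Δδ := by
    intro v hv
    apply ContinuousAt.continuousWithinAt
    show ContinuousAt (fun w => Finset.univ.inf' Finset.univ_nonempty
      (fun i => T w i / w i)) v
    exact ContinuousAt.finset_inf'_apply _ (fun j _ =>
      ((Tcont j).continuousAt).div (continuous_apply j).continuousAt
        (ne_of_gt ((hΔ_basic v hv).1 j)))
  obtain ⟨v, hvΔ, hvmax⟩ := hΔc.exists_isMaxOn hΔne hg_cont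
  obtain ⟨hv_pos, hv_nonneg, hv_le1⟩ := hΔ_basic v hvΔ
  have hv_sum : ∑ j, v j = 1 := hvΔ.2
  set lam := g v with hlam_def
  have hlam_le : ∀ j, lam * v j ≤ T v j := by
    intro j
    have h1 : lam ≤ T v j / v j := Finset.inf'_le _ (Finset.mem_univ j)
    rw [le_div_iff₀ (hv_pos j)] at h1
    linarith
  have hlam_pos : 0 < lam := by
    have : ∀ j ∈ Finset.univ, m ≤ T v j / (v j : ℝ) := by
      intro j _
      rw [le_div_iff₀ (hv_pos j)]
      calc m * v j ≤ m * 1 := by nlinarith [hv_le1 j]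
        _ = m := mul_one m
        _ ≤ T v j := hT_low v hv_nonneg hv_sum j
    exact lt_of_lt_of_le hm0 (Finset.le_inf' _ _ this)
  -- equality: T v = lam • v
  have heqT : ∀ j, T v j = lam * v j := by
    by_contra hcon
    push_neg at hcon
    obtain ⟨i1, hi1⟩ := hcon
    have hi1' : lam * v i1 < T v i1 := lt_of_le_of_ne (hlam_le i1) (Ne.symm hi1)
    set ε := T v i1 - lam * v i1 with hε_def
    have hε0 : 0 < ε := by rw [hε_def]; linarith
    set u := fun j => T v j with hu_def
    have hu_low : ∀ j, m ≤ u j := fun j => hT_low v hv_nonneg hv_sum j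
    have hu_high : ∀ j, u j ≤ Mb := fun j => hT_high v hv_nonneg hv_sum j
    have hu_pos : ∀ j, 0 < u j := fun j => lt_of_lt_of_le hm0 (hu_low j)
    have hstep : ∀ j, lam * u j + m * ε ≤ T u j := by
      intro j
      apply Tge
      intro b hb
      have hbK := hRK j hb
      have hb_pos : ∀ k, 0 < b k := hKpos b hbK
      have h2 : ∑ k, b k * (lam * v k + (if k = i1 then ε else 0)) ≤ ∑ k, b k * u k := by
        apply Finset.sum_le_sum
        intro k _
        apply mul_le_mul_of_nonneg_left _ (hb_pos k).le
        by_cases hk : k = i1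
        · subst hk
          simp only [if_pos rfl]
          show lam * v k + ε ≤ T v k
          rw [hε_def]
          linarith
        · simp only [if_neg hk, add_zero]
          exact hlam_le k
      have h3 : ∑ k, b k * (lam * v k + (if k = i1 then ε else 0))
          = lam * (b ⬝ᵥ v) + b i1 * ε := by
        have hterm : ∀ k, b k * (lam * v k + (if k = i1 then ε else 0))
            = lam * (b k * v k) + (if k = i1 then b k * ε else 0) := by
          intro k; by_cases hk : k = i1 <;> simp [hk] <;> ring
        simp only [hterm]
        rw [Finset.sum_add_distrib, Finset.sum_ite_eq' Finset.univ i1 (fun k => b k * ε),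
          ← Finset.mul_sum]
        simp [dotProduct]
      have h4 : lam * u j + m * ε ≤ lam * (b ⬝ᵥ v) + b i1 * ε := by
        apply add_le_add
        · exact mul_le_mul_of_nonneg_left (Tle v j b hb) hlam_pos.le
        · exact mul_le_mul_of_nonneg_right (hmK b hbK i1) hε0.le
      have h1 : b ⬝ᵥ u = ∑ k, b k * u k := rfl
      rw [h1]
      linarith
    set s := ∑ j, u j with hs_def
    have hs_pos : 0 < s := Finset.sum_pos (fun j _ => hu_pos j) Finset.univ_nonempty
    have hs_high : s ≤ N * Mb := by
      calc s = ∑ j, u j := rfl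
        _ ≤ ∑ _j : Fin N, Mb := Finset.sum_le_sum (fun j _ => hu_high j)
        _ = N * Mb := by
            rw [Finset.sum_const, Finset.card_univ, Fintype.card_fin, nsmul_eq_mul]
    set w := s⁻¹ • u with hw_def
    have hwΔ : w ∈ Δδ := by
      constructor
      · intro j
        show δ ≤ s⁻¹ * u j
        rw [← div_eq_inv_mul (u j) s, hδ_def]
        exact div_le_div₀ (hu_pos j).le (hu_low j) hs_pos hs_high
      · show ∑ j, s⁻¹ * u j = 1
        rw [← Finset.mul_sum, ← hs_def, inv_mul_cancel₀ hs_pos.ne']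
    have hgw : lam < g w := by
      rw [hg_def]
      rw [Finset.lt_inf'_iff]
      intro j _
      have hTw : T w j = s⁻¹ * T u j := Thom u s⁻¹ (by positivity) j
      have hwj : w j = s⁻¹ * u j := rfl
      rw [hTw, hwj]
      have hcancel : s⁻¹ * T u j / (s⁻¹ * u j) = T u j / u j :=
        mul_div_mul_left _ _ (inv_ne_zero hs_pos.ne')
      rw [hcancel, lt_div_iff₀ (hu_pos j)]
      have := hstep j
      nlinarith
    exact absurd (hvmax hwΔ) (not_le.2 hgw)
  refine ⟨v, lam, hv_pos, hlam_pos, ?_, ?_⟩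
  · intro j a ha
    exact le_trans (hlam_le j) (Tle v j a ha)
  · intro j
    obtain ⟨a, ha, hae, _⟩ := Tmin v j
    exact ⟨a, ha, by rw [hae, heqT j]⟩

lemma specRad_zero_dim (A : Matrix (Fin 0) (Fin 0) ℝ) : specRad A = 0 := by
  unfold specRad
  convert Real.sSup_empty using 2
  ext r
  simp only [Set.mem_setOf_eq, Set.mem_empty_iff_false, iff_false]
  rintro ⟨μ, hμ, _⟩
  have : (A.map Complex.ofReal).charpoly = 1 := by
    rw [Matrix.charpoly, Matrix.det_isEmpty]
  rw [this] at hμ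
  simpa [Polynomial.IsRoot] using hμ

lemma prod_pos_of_list {N : ℕ} [NeZero N] :
    ∀ L : List (Matrix (Fin N) (Fin N) ℝ), L ≠ [] →
    (∀ M ∈ L, ∀ i j, 0 < M i j) → ∀ i j, 0 < L.prod i j := by
  intro L
  induction L with
  | nil => intro h; exact absurd rfl h
  | cons M L ih =>
    intro _ hmem i j
    rw [List.prod_cons]
    rcases eq_or_ne L [] with rfl | hL
    · simpa using hmem M (by simp) i j
    · rw [Matrix.mul_apply]
      apply Finset.sum_pos _ Finset.univ_nonempty
      intro k _
      exact mul_pos (hmem M (by simp) i k)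
        (ih hL (fun M' hM' => hmem M' (List.mem_cons_of_mem _ hM')) k j)

theorem stmt_8 {N : ℕ} (S : Set (Matrix (Fin N) (Fin N) ℝ)) (hS : IsIRU S)
    (hcomp : IsCompact S) (hne : S.Nonempty) (hpos : ∀ A ∈ S, ∀ i j, 0 < A i j)
    (n : ℕ) (hn : 1 ≤ n) (A : Fin n → Matrix (Fin N) (Fin N) ℝ)
    (hA : ∀ i, A i ∈ S) :
    sInf (specRad '' S) ^ n ≤ specRad ((List.ofFn A).reverse.prod) := by
  rcases Nat.eq_zero_or_pos N with rfl | hN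
  · -- N = 0
    obtain ⟨A0, hA0⟩ := hne
    have himg : specRad '' S = {0} := by
      apply Set.eq_singleton_iff_nonempty_unique_mem.2
      exact ⟨⟨specRad A0, ⟨A0, hA0, rfl⟩⟩, by rintro r ⟨B, _, rfl⟩; exact specRad_zero_dim B⟩
    rw [himg, csInf_singleton, specRad_zero_dim]
    rw [zero_pow (by omega)]
  haveI : NeZero N := ⟨Nat.pos_iff_ne_zero.1 hN⟩
  -- rows of S
  set Rw : Fin N → Set (Fin N → ℝ) := fun i => (fun M => M i) '' S with hRw_def
  have hRwc : ∀ i, IsCompact (Rw i) := fun i => hcomp.image (continuous_apply i)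
  have hRwne : ∀ i, (Rw i).Nonempty := fun i => hne.image _
  have hRwpos : ∀ i, ∀ a ∈ Rw i, ∀ j, 0 < a j := by
    rintro i a ⟨B, hB, rfl⟩ j
    exact hpos B hB i j
  have hSrows : ∀ (Am : Matrix (Fin N) (Fin N) ℝ), (∀ i, Am i ∈ Rw i) → Am ∈ S := by
    obtain ⟨rows, hrows⟩ := hS
    intro Am h
    rw [hrows]
    intro i
    obtain ⟨B, hB, hBi⟩ := h i
    rw [← hBi]
    have hB' : ∀ k, B k ∈ rows k := by rw [hrows] at hB; exact hB
    exact hB' i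
  -- eigenpair for the IRU set
  obtain ⟨v, lam, hv_pos, hlam_pos, hlow, heq⟩ := exists_eig_pair Rw hRwc hRwne hRwpos
  -- the minimizing matrix B
  choose brow hbrow1 hbrow2 using heq
  set B : Matrix (Fin N) (Fin N) ℝ := Matrix.of brow with hB_def
  have hBS : B ∈ S := hSrows B (fun i => hbrow1 i)
  have hBnn : ∀ i j, 0 ≤ B i j := fun i j => (hpos B hBS i j).le
  have hBeig : ∀ i, (B *ᵥ v) i = lam * v i := fun i => hbrow2 i
  have hspecB : specRad B = lam := specRad_eq_of_eig B hBnn hv_pos hBeig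
  -- the infimum
  set r := sInf (specRad '' S) with hr_def
  have hbdd : BddBelow (specRad '' S) := by
    refine ⟨0, ?_⟩
    rintro x ⟨C, _, rfl⟩
    exact specRad_nonneg C
  have hr0 : 0 ≤ r := le_csInf (hne.image _) (by rintro x ⟨C, _, rfl⟩; exact specRad_nonneg C)
  have hrlam : r ≤ lam := hspecB ▸ csInf_le hbdd ⟨B, hBS, rfl⟩
  -- every matrix in S expands v by at least r
  have hAv : ∀ C ∈ S, ∀ i, r * v i ≤ (C *ᵥ v) i := by
    intro C hC i
    have h1 : lam * v i ≤ C i ⬝ᵥ v := hlow i (C i) ⟨C, hC, rfl⟩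
    have h2 : r * v i ≤ lam * v i :=
      mul_le_mul_of_nonneg_right hrlam (hv_pos i).le
    exact le_trans h2 h1
  -- product expands v by at least r^len
  have hprod : ∀ L : List (Matrix (Fin N) (Fin N) ℝ), (∀ M ∈ L, M ∈ S) →
      ∀ i, r ^ L.length * v i ≤ (L.prod *ᵥ v) i := by
    intro L
    induction L with
    | nil => intro _ i; simp [Matrix.one_mulVec]
    | cons M L ih =>
      intro hmem i
      have hMS : M ∈ S := hmem M (by simp)
      rw [List.prod_cons, ← Matrix.mulVec_mulVec]
      have hLv : ∀ j, r ^ L.length * v j ≤ (L.prod *ᵥ v) j :=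
        ih (fun M' hM' => hmem M' (List.mem_cons_of_mem _ hM'))
      calc r ^ (M :: L).length * v i
          = r ^ L.length * (r * v i) := by rw [List.length_cons, pow_succ]; ring
        _ ≤ r ^ L.length * (M *ᵥ v) i :=
            mul_le_mul_of_nonneg_left (hAv M hMS i) (pow_nonneg hr0 _)
        _ = ∑ j, M i j * (r ^ L.length * v j) := by
            have hmv : (M *ᵥ v) i = ∑ j, M i j * v j := rfl
            rw [hmv, Finset.mul_sum]
            congr 1; ext j; ring
        _ ≤ ∑ j, M i j * ((L.prod *ᵥ v) j) := by
            apply Finset.sum_le_sum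
            intro j _
            exact mul_le_mul_of_nonneg_left (hLv j) (hpos M hMS i j).le
        _ = (M *ᵥ (L.prod *ᵥ v)) i := rfl
  -- the product matrix
  set L := (List.ofFn A).reverse with hL_def
  have hLmem : ∀ M ∈ L, M ∈ S := by
    intro M hM
    rw [hL_def, List.mem_reverse, List.mem_ofFn] at hM
    obtain ⟨k, rfl⟩ := hM
    exact hA k
  have hLlen : L.length = n := by simp [hL_def]
  have hLne : L ≠ [] := by
    intro h
    rw [h] at hLlen
    simp at hLlen
    omega
  set P := L.prod with hP_def
  have hPpos : ∀ i j, 0 < P i j :=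
    prod_pos_of_list L hLne (fun M hM => hpos M (hLmem M hM))
  -- Perron eigenpair for P
  obtain ⟨u, μ, hu_pos, hμ_pos, _, hPeq⟩ := exists_eig_pair (fun i => {P i})
    (fun i => isCompact_singleton) (fun i => Set.singleton_nonempty _)
    (by rintro i a rfl j; exact hPpos i j)
  have hPeig : ∀ i, (P *ᵥ u) i = μ * u i := by
    intro i
    obtain ⟨a, ha, hae⟩ := hPeq i
    rw [Set.mem_singleton_iff] at ha
    subst ha
    exact hae
  have hspecP : specRad P = μ := specRad_eq_of_eig P (fun i j => (hPpos i j).le) hu_pos hPeig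
  -- comparison: r ^ n ≤ μ
  have hcomp2 : r ^ n ≤ μ := by
    obtain ⟨i0, hi0⟩ := Finite.exists_max (fun i => v i / u i)
    have hvu : ∀ j, v j ≤ (v i0 / u i0) * u j := by
      intro j
      rw [← div_le_iff₀ (hu_pos j)]
      exact hi0 j
    have key : r ^ n * v i0 ≤ μ * v i0 := by
      calc r ^ n * v i0 = r ^ L.length * v i0 := by rw [hLlen]
        _ ≤ (P *ᵥ v) i0 := hprod L hLmem i0
        _ = ∑ j, P i0 j * v j := rfl
        _ ≤ ∑ j, P i0 j * ((v i0 / u i0) * u j) := by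
            apply Finset.sum_le_sum
            intro j _
            exact mul_le_mul_of_nonneg_left (hvu j) (hPpos i0 j).le
        _ = (v i0 / u i0) * ∑ j, P i0 j * u j := by
            rw [Finset.mul_sum]; congr 1; ext j; ring
        _ = (v i0 / u i0) * (μ * u i0) := by
            have : ∑ j, P i0 j * u j = (P *ᵥ u) i0 := rfl
            rw [this, hPeig i0]
        _ = μ * ((v i0 / u i0) * u i0) := by ring
        _ = μ * v i0 := by rw [div_mul_cancel₀ _ (hu_pos i0).ne']
    exact le_of_mul_le_mul_right (by linarith) (hv_pos i0)
  rw [hspecP]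
  exact hcomp2
end

section
/- Let 𝒜 be a compact IRU-set of strictly positive N×N matrices. Then for every n ≥ 1 and every choice of matrices A_1, …, A_n ∈ 𝒜, one has ρ(A_n ⋯ A_1) ≤ (max_{A∈𝒜} ρ(A))^n. -/
open Matrix

open Polynomial


lemma charpoly_isRoot_iff' {K : Type*} [Field K] {n : Type*} [Fintype n] [DecidableEq n]
    (M : Matrix n n K) (μ : K) :
    M.charpoly.IsRoot μ ↔ ∃ v, v ≠ 0 ∧ M.mulVec v = μ • v := by
  have h1 : M.charpoly.IsRoot μ ↔ (Matrix.scalar n μ - M).det = 0 := by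
    rw [Matrix.charpoly, Polynomial.IsRoot, _root_.eval_det, Matrix.matPolyEquiv_charmatrix]
    simp
  have h2 : ∀ v : n → K, (Matrix.scalar n μ - M).mulVec v = μ • v - M.mulVec v := by
    intro v
    rw [Matrix.sub_mulVec]
    congr 1
    ext i
    rw [Matrix.scalar_apply, Matrix.mulVec_diagonal]
    simp
  rw [h1, ← Matrix.exists_mulVec_eq_zero_iff]
  constructor
  · rintro ⟨v, hv, h⟩
    exact ⟨v, hv, by rw [h2 v, sub_eq_zero] at h; exact h.symm⟩
  · rintro ⟨v, hv, h⟩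
    exact ⟨v, hv, by rw [h2 v, sub_eq_zero, h]⟩

lemma specRad_set_bddAbove {N : ℕ} (A : Matrix (Fin N) (Fin N) ℝ) :
    BddAbove {r : ℝ | ∃ μ : ℂ, (A.map Complex.ofReal).charpoly.IsRoot μ ∧ r = ‖μ‖} := by
  set p := (A.map Complex.ofReal).charpoly with hp'
  have hp : p ≠ 0 := (Matrix.charpoly_monic _).ne_zero
  have hsub : {r : ℝ | ∃ μ : ℂ, p.IsRoot μ ∧ r = ‖μ‖} ⊆
      (fun z : ℂ => ‖z‖) '' (p.roots.toFinset : Set ℂ) := by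
    rintro r ⟨μ, hμ, rfl⟩
    refine ⟨μ, ?_, rfl⟩
    simp only [Finset.coe_sort_coe, Finset.mem_coe, Multiset.mem_toFinset]
    exact (Polynomial.mem_roots hp).mpr hμ
  exact (((p.roots.toFinset.finite_toSet).image _).subset hsub).bddAbove

lemma specRad_le_of_mulVec_le {N : ℕ} {P : Matrix (Fin N) (Fin N) ℝ} {v : Fin N → ℝ} {t : ℝ}
    (hP : ∀ i j, 0 ≤ P i j) (hv : ∀ i, 0 < v i) (ht : 0 ≤ t)
    (h : ∀ i, P.mulVec v i ≤ t * v i) : specRad P ≤ t := by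
  rw [specRad]
  rcases Set.eq_empty_or_nonempty {r : ℝ | ∃ μ : ℂ, (P.map Complex.ofReal).charpoly.IsRoot μ ∧
      r = ‖μ‖} with he | hne
  · rw [he, Real.sSup_empty]; exact ht
  refine Real.sSup_le ?_ ht
  rintro r ⟨μ, hμ, rfl⟩
  obtain ⟨x, hx0, hx⟩ := (charpoly_isRoot_iff' _ μ).mp hμ
  set w : Fin N → ℝ := fun i => ‖x i‖ with hw'
  have hw : ∀ i, ‖μ‖ * w i ≤ ∑ j, P i j * w j := by
    intro i
    have he : μ * x i = ∑ j, (P.map Complex.ofReal) i j * x j := by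
      have h2 := congrFun hx i
      rw [Matrix.mulVec, dotProduct] at h2
      simpa [Pi.smul_apply, smul_eq_mul] using h2.symm
    calc ‖μ‖ * w i = ‖μ * x i‖ := by rw [norm_mul]
    _ = ‖∑ j, (P.map Complex.ofReal) i j * x j‖ := by rw [he]
    _ ≤ ∑ j, ‖(P.map Complex.ofReal) i j * x j‖ :=
        norm_sum_le _ _
    _ = ∑ j, P i j * w j := by
        refine Finset.sum_congr rfl fun j _ => ?_
        rw [norm_mul]
        congr 1
        simp [Matrix.map_apply, Complex.norm_real, abs_of_nonneg (hP i j)]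
  have hNne : (Finset.univ : Finset (Fin N)).Nonempty := by
    by_contra hc
    apply hx0
    funext i
    exact absurd (Finset.mem_univ i) (fun h => hc ⟨i, h⟩)
  obtain ⟨i0, _, hi0⟩ := Finset.exists_max_image Finset.univ (fun i => w i / v i) hNne
  set c := w i0 / v i0 with hc'
  have hwc : ∀ j, w j ≤ c * v j := by
    intro j
    have h1 : w j / v j ≤ c := hi0 j (Finset.mem_univ j)
    have := (div_le_iff₀ (hv j)).mp h1
    linarith
  have hc0 : 0 ≤ c := div_nonneg (norm_nonneg _) (hv i0).le
  have hwi0 : w i0 = c * v i0 := by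
    rw [hc', div_mul_cancel₀ _ (hv i0).ne']
  have hwi0pos : 0 < w i0 := by
    obtain ⟨j, hj⟩ : ∃ j, x j ≠ 0 := by
      by_contra hc2
      push_neg at hc2
      exact hx0 (funext hc2)
    have h1 : 0 < w j := norm_pos_iff.mpr hj
    have h2 : 0 < w j / v j := div_pos h1 (hv j)
    have h3 : w j / v j ≤ c := hi0 j (Finset.mem_univ j)
    rw [hwi0]
    exact mul_pos (lt_of_lt_of_le h2 h3) (hv i0)
  have key : ‖μ‖ * w i0 ≤ t * w i0 := by
    calc ‖μ‖ * w i0 ≤ ∑ j, P i0 j * w j := hw i0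
    _ ≤ ∑ j, P i0 j * (c * v j) := by
        refine Finset.sum_le_sum fun j _ => ?_
        exact mul_le_mul_of_nonneg_left (hwc j) (hP i0 j)
    _ = c * (P.mulVec v i0) := by
        rw [Matrix.mulVec, dotProduct, Finset.mul_sum]
        exact Finset.sum_congr rfl fun j _ => by ring
    _ ≤ c * (t * v i0) := mul_le_mul_of_nonneg_left (h i0) hc0
    _ = t * w i0 := by rw [hwi0]; ring
  exact le_of_mul_le_mul_right key hwi0pos

lemma le_specRad_of_eigen {N : ℕ} {B : Matrix (Fin N) (Fin N) ℝ} {v : Fin N → ℝ} {lam : ℝ}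
    (hv : v ≠ 0) (h : B.mulVec v = lam • v) : lam ≤ specRad B := by
  have hroot : B.charpoly.IsRoot lam := (charpoly_isRoot_iff' B lam).mpr ⟨v, hv, h⟩
  have hroot' : (B.map Complex.ofReal).charpoly.IsRoot (lam : ℂ) := by
    have hmap := Matrix.charpoly_map B Complex.ofRealHom
    have : (B.map Complex.ofReal).charpoly = B.charpoly.map Complex.ofRealHom := by
      convert hmap using 3
      rfl
    rw [this]
    exact hroot.map
  have hmem : |lam| ∈ {r : ℝ | ∃ μ : ℂ, (B.map Complex.ofReal).charpoly.IsRoot μ ∧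
      r = ‖μ‖} := ⟨(lam : ℂ), hroot', by rw [Complex.norm_real, Real.norm_eq_abs]⟩
  exact le_trans (le_abs_self lam) (le_csSup (specRad_set_bddAbove B) hmem)

section aux
variable {N : ℕ}

-- bump lemma
lemma bump_aux (hN : 0 < N) {B : Matrix (Fin N) (Fin N) ℝ} (hB : ∀ i j, 0 < B i j)
    {v : Fin N → ℝ} (hv0 : ∀ i, 0 ≤ v i) (hv1 : ∑ i, v i = 1) {t : ℝ}
    (hle : ∀ i, t * v i ≤ B.mulVec v i) (i0 : Fin N) (hstrict : t * v i0 < B.mulVec v i0) :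
    ∃ w : Fin N → ℝ, (∀ i, 0 ≤ w i) ∧ (∑ i, w i = 1) ∧
      ∃ s, t < s ∧ ∀ i, s * w i ≤ B.mulVec w i := by
  have : Nonempty (Fin N) := Fin.pos_iff_nonempty.mp hN
  set u := B.mulVec v with hu
  -- u is strictly positive
  have hv_ex : ∃ k, 0 < v k := by
    by_contra hc
    push_neg at hc
    have : ∑ i, v i = 0 := Finset.sum_eq_zero fun i _ => le_antisymm (hc i) (hv0 i)
    rw [hv1] at this; exact one_ne_zero this
  obtain ⟨k0, hk0⟩ := hv_ex
  have hupos : ∀ j, 0 < u j := by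
    intro j
    rw [hu, Matrix.mulVec, dotProduct]
    have h1 : 0 < B j k0 * v k0 := mul_pos (hB j k0) hk0
    have h2 : ∀ k ∈ Finset.univ, 0 ≤ B j k * v k := fun k _ => mul_nonneg (hB j k).le (hv0 k)
    calc (0:ℝ) < B j k0 * v k0 := h1
    _ ≤ ∑ k, B j k * v k := Finset.single_le_sum h2 (Finset.mem_univ k0)
  set d : Fin N → ℝ := fun j => u j - t * v j with hd
  have hd0 : ∀ j, 0 ≤ d j := fun j => sub_nonneg.mpr (hle j)
  have hdi0 : 0 < d i0 := sub_pos.mpr hstrict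
  have hBd : ∀ j, 0 < B.mulVec d j := by
    intro j
    rw [Matrix.mulVec, dotProduct]
    have h1 : 0 < B j i0 * d i0 := mul_pos (hB j i0) hdi0
    have h2 : ∀ k ∈ Finset.univ, 0 ≤ B j k * d k := fun k _ => mul_nonneg (hB j k).le (hd0 k)
    calc (0:ℝ) < B j i0 * d i0 := h1
    _ ≤ ∑ k, B j k * d k := Finset.single_le_sum h2 (Finset.mem_univ i0)
  -- B.mulVec u ≥ t • u + B.mulVec d
  have hBu : ∀ j, t * u j + B.mulVec d j ≤ B.mulVec u j := by
    intro j
    have hveq : u = (fun k => t * v k + d k) := by funext k; simp [hd]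
    have : B.mulVec u j = t * B.mulVec v j + B.mulVec d j := by
      conv_lhs => rw [hveq]
      simp only [Matrix.mulVec, dotProduct]
      rw [Finset.mul_sum, ← Finset.sum_add_distrib]
      exact Finset.sum_congr rfl fun k _ => by ring
    rw [this, ← hu]
  set ε : ℝ := Finset.univ.inf' Finset.univ_nonempty (fun j => B.mulVec d j / u j) with hε
  have hεpos : 0 < ε := by
    rw [hε]
    apply (Finset.lt_inf'_iff _).mpr
    exact fun j _ => div_pos (hBd j) (hupos j)
  have hεle : ∀ j, ε * u j ≤ B.mulVec d j := by
    intro j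
    have h1 : ε ≤ B.mulVec d j / u j := Finset.inf'_le _ (Finset.mem_univ j)
    calc ε * u j ≤ (B.mulVec d j / u j) * u j := mul_le_mul_of_nonneg_right h1 (hupos j).le
    _ = B.mulVec d j := div_mul_cancel₀ _ (hupos j).ne'
  set σ : ℝ := ∑ j, u j with hσ
  have hσpos : 0 < σ := Finset.sum_pos (fun j _ => hupos j) Finset.univ_nonempty
  refine ⟨fun j => σ⁻¹ * u j, fun j => mul_nonneg (inv_nonneg.mpr hσpos.le) (hupos j).le, ?_,
    t + ε, lt_add_of_pos_right t hεpos, ?_⟩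
  · rw [← Finset.mul_sum, ← hσ, inv_mul_cancel₀ hσpos.ne']
  · intro j
    have h1 : B.mulVec (fun k => σ⁻¹ * u k) j = σ⁻¹ * B.mulVec u j := by
      simp only [Matrix.mulVec, dotProduct]
      rw [Finset.mul_sum]
      exact Finset.sum_congr rfl fun k _ => by ring
    rw [h1]
    have h2 : (t + ε) * u j ≤ B.mulVec u j := by
      calc (t + ε) * u j = t * u j + ε * u j := by ring
      _ ≤ t * u j + B.mulVec d j := by linarith [hεle j]
      _ ≤ B.mulVec u j := hBu j
    calc (t + ε) * (σ⁻¹ * u j) = σ⁻¹ * ((t + ε) * u j) := by ring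
    _ ≤ σ⁻¹ * B.mulVec u j := mul_le_mul_of_nonneg_left h2 (inv_nonneg.mpr hσpos.le)

end aux

lemma prod_mulVec_le {N : ℕ} {v : Fin N → ℝ} (hv : ∀ i, 0 ≤ v i) {t : ℝ} (ht : 0 ≤ t)
    (L : List (Matrix (Fin N) (Fin N) ℝ))
    (hL : ∀ M ∈ L, (∀ i j, 0 ≤ M i j) ∧ (∀ i, M.mulVec v i ≤ t * v i)) :
    (∀ i j, 0 ≤ L.prod i j) ∧ ∀ i, L.prod.mulVec v i ≤ t ^ L.length * v i := by
  induction L with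
  | nil =>
    constructor
    · intro i j
      by_cases h : i = j <;> simp [Matrix.one_apply, h]
    · intro i
      simp [Matrix.one_mulVec]
  | cons M L ih =>
    obtain ⟨hM0, hMv⟩ := hL M (List.mem_cons_self)
    obtain ⟨hP0, hPv⟩ := ih fun M' hM' => hL M' (List.mem_cons_of_mem M hM')
    rw [List.prod_cons]
    constructor
    · intro i j
      rw [Matrix.mul_apply]
      exact Finset.sum_nonneg fun k _ => mul_nonneg (hM0 i k) (hP0 k j)
    · intro i
      rw [List.length_cons, ← Matrix.mulVec_mulVec]
      calc M.mulVec (L.prod.mulVec v) i ≤ t ^ L.length * M.mulVec v i := by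
            rw [Matrix.mulVec, Matrix.mulVec, dotProduct, dotProduct, Finset.mul_sum]
            refine Finset.sum_le_sum fun j _ => ?_
            calc M i j * L.prod.mulVec v j ≤ M i j * (t ^ L.length * v j) :=
                  mul_le_mul_of_nonneg_left (hPv j) (hM0 i j)
            _ = t ^ L.length * (M i j * v j) := by ring
      _ ≤ t ^ L.length * (t * v i) := mul_le_mul_of_nonneg_left (hMv i) (pow_nonneg ht _)
      _ = t ^ (L.length + 1) * v i := by ring


lemma simplex_compact {N : ℕ} :
    IsCompact {v : Fin N → ℝ | (∀ i, 0 ≤ v i) ∧ ∑ i, v i = 1} := by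
  have hclosed : IsClosed {v : Fin N → ℝ | (∀ i, 0 ≤ v i) ∧ ∑ i, v i = 1} := by
    have h1 : IsClosed {v : Fin N → ℝ | ∀ i, 0 ≤ v i} := by
      have : {v : Fin N → ℝ | ∀ i, 0 ≤ v i} = ⋂ i, {v | 0 ≤ v i} := by ext; simp
      rw [this]
      exact isClosed_iInter fun i => isClosed_le continuous_const (continuous_apply i)
    have h2 : IsClosed {v : Fin N → ℝ | ∑ i, v i = 1} := by
      have : {v : Fin N → ℝ | ∑ i, v i = 1} = (fun v : Fin N → ℝ => ∑ i, v i) ⁻¹' {1} := rfl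
      rw [this]
      exact IsClosed.preimage (continuous_finset_sum _ fun i _ => continuous_apply i)
        isClosed_singleton
    exact h1.inter h2
  have hsub : {v : Fin N → ℝ | (∀ i, 0 ≤ v i) ∧ ∑ i, v i = 1} ⊆
      Set.Icc (0 : Fin N → ℝ) 1 := by
    rintro v ⟨h0, h1⟩
    refine ⟨fun i => h0 i, fun i => ?_⟩
    calc v i ≤ ∑ j, v j := Finset.single_le_sum (fun j _ => h0 j) (Finset.mem_univ i)
    _ = 1 := h1
  exact IsCompact.of_isClosed_subset isCompact_Icc hclosed hsub

lemma t_le_bound {N : ℕ} {B : Matrix (Fin N) (Fin N) ℝ} {w : Fin N → ℝ} {C s : ℝ}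
    (hw0 : ∀ i, 0 ≤ w i) (hw1 : ∑ i, w i = 1)
    (hBC : ∀ i j, B i j ≤ C)
    (hs : ∀ i, s * w i ≤ B.mulVec w i) : s ≤ N * C := by
  have h1 : s = ∑ i, s * w i := by rw [← Finset.mul_sum, hw1, mul_one]
  have h2 : ∑ i, s * w i ≤ ∑ i, B.mulVec w i := Finset.sum_le_sum fun i _ => hs i
  have h3 : ∑ i, B.mulVec w i = ∑ j, (∑ i, B i j) * w j := by
    simp only [Matrix.mulVec, dotProduct]
    rw [Finset.sum_comm]
    exact Finset.sum_congr rfl fun j _ => (Finset.sum_mul _ _ _).symm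
  have h4 : ∑ j, (∑ i, B i j) * w j ≤ ∑ j, ((N : ℝ) * C) * w j := by
    refine Finset.sum_le_sum fun j _ => mul_le_mul_of_nonneg_right ?_ (hw0 j)
    calc ∑ i, B i j ≤ ∑ _i : Fin N, C := Finset.sum_le_sum fun i _ => hBC i j
    _ = N * C := by rw [Finset.sum_const, Finset.card_univ, Fintype.card_fin, nsmul_eq_mul]
  have h5 : ∑ j, ((N : ℝ) * C) * w j = N * C := by rw [← Finset.mul_sum, hw1, mul_one]
  linarith


theorem stmt_9 {N : ℕ} (S : Set (Matrix (Fin N) (Fin N) ℝ)) (hS : IsIRU S)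
    (hcomp : IsCompact S) (hne : S.Nonempty) (hpos : ∀ A ∈ S, ∀ i j, 0 < A i j)
    (n : ℕ) (hn : 1 ≤ n) (A : Fin n → Matrix (Fin N) (Fin N) ℝ)
    (hA : ∀ i, A i ∈ S) :
    specRad ((List.ofFn A).reverse.prod) ≤ sSup (specRad '' S) ^ n := by
  rcases Nat.eq_zero_or_pos N with hN | hN
  · subst hN
    have hzero : ∀ P : Matrix (Fin 0) (Fin 0) ℝ, specRad P = 0 := by
      intro P
      have hcp : (P.map Complex.ofReal).charpoly = 1 := by
        rw [Matrix.charpoly, Matrix.det_isEmpty]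
      rw [specRad]
      have : {r : ℝ | ∃ μ : ℂ, (P.map Complex.ofReal).charpoly.IsRoot μ ∧ r = ‖μ‖}
          = ∅ := by
        ext r
        simp [hcp, Polynomial.IsRoot]
      rw [this, Real.sSup_empty]
    obtain ⟨B0, hB0⟩ := hne
    have himg : specRad '' S = {0} := by
      ext r
      simp only [Set.mem_image, Set.mem_singleton_iff]
      constructor
      · rintro ⟨B, _, rfl⟩; exact hzero B
      · rintro rfl; exact ⟨B0, hB0, hzero B0⟩
    rw [hzero, himg, csSup_singleton, zero_pow (by omega : n ≠ 0)]
  · have hNne : Nonempty (Fin N) := Fin.pos_iff_nonempty.mp hN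
    obtain ⟨rows, hrows⟩ := hS
    -- bound on entries
    have hfcont : Continuous fun B : Matrix (Fin N) (Fin N) ℝ => ∑ i, ∑ j, B i j :=
      continuous_finset_sum _ fun i _ => continuous_finset_sum _ fun j _ =>
        (continuous_apply j).comp (continuous_apply i)
    obtain ⟨B1, hB1S, hB1max⟩ := hcomp.exists_isMaxOn hne hfcont.continuousOn
    set C : ℝ := ∑ i, ∑ j, B1 i j with hC
    have hCpos : 0 < C :=
      Finset.sum_pos (fun i _ => Finset.sum_pos (fun j _ => hpos B1 hB1S i j)
        Finset.univ_nonempty) Finset.univ_nonempty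
    have hCbd : ∀ B ∈ S, ∀ i j, B i j ≤ C := by
      intro B hB i j
      calc B i j ≤ ∑ j', B i j' :=
            Finset.single_le_sum (fun k _ => (hpos B hB i k).le) (Finset.mem_univ j)
      _ ≤ ∑ i', ∑ j', B i' j' :=
            Finset.single_le_sum
              (fun k _ => Finset.sum_nonneg fun l _ => (hpos B hB k l).le) (Finset.mem_univ i)
      _ ≤ C := hB1max hB
    set D : ℝ := N * C with hD
    have hDpos : 0 < D := mul_pos (by exact_mod_cast hN) hCpos
    -- the compact search space
    set Δ : Set (Fin N → ℝ) := {v | (∀ i, 0 ≤ v i) ∧ ∑ i, v i = 1} with hΔ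
    set T : Set (Matrix (Fin N) (Fin N) ℝ × ((Fin N → ℝ) × ℝ)) :=
      {p | (p.1 ∈ S ∧ p.2.1 ∈ Δ ∧ p.2.2 ∈ Set.Icc (0:ℝ) D) ∧
           ∀ i, p.2.2 * p.2.1 i ≤ p.1.mulVec p.2.1 i} with hT
    have hTcomp : IsCompact T := by
      have h1 : IsCompact (S ×ˢ (Δ ×ˢ Set.Icc (0:ℝ) D)) :=
        hcomp.prod (simplex_compact.prod isCompact_Icc)
      have h2 : IsClosed {p : Matrix (Fin N) (Fin N) ℝ × ((Fin N → ℝ) × ℝ) |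
          ∀ i, p.2.2 * p.2.1 i ≤ p.1.mulVec p.2.1 i} := by
        have heq : {p : Matrix (Fin N) (Fin N) ℝ × ((Fin N → ℝ) × ℝ) |
            ∀ i, p.2.2 * p.2.1 i ≤ p.1.mulVec p.2.1 i}
            = ⋂ i, {p : Matrix (Fin N) (Fin N) ℝ × ((Fin N → ℝ) × ℝ) |
                p.2.2 * p.2.1 i ≤ p.1.mulVec p.2.1 i} := by
          ext p; simp
        rw [heq]
        refine isClosed_iInter fun i => isClosed_le ?_ ?_
        · exact (continuous_snd.comp continuous_snd).mul
            ((continuous_apply i).comp (continuous_fst.comp continuous_snd))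
        · have hrw : (fun p : Matrix (Fin N) (Fin N) ℝ × ((Fin N → ℝ) × ℝ) =>
              p.1.mulVec p.2.1 i) = fun p => ∑ j, p.1 i j * p.2.1 j := by
            funext p; rw [Matrix.mulVec, dotProduct]
          rw [hrw]
          exact continuous_finset_sum _ fun j _ =>
            ((continuous_apply j).comp ((continuous_apply i).comp continuous_fst)).mul
              ((continuous_apply j).comp (continuous_fst.comp continuous_snd))
      have heqT : T = (S ×ˢ (Δ ×ˢ Set.Icc (0:ℝ) D)) ∩
          {p : Matrix (Fin N) (Fin N) ℝ × ((Fin N → ℝ) × ℝ) |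
            ∀ i, p.2.2 * p.2.1 i ≤ p.1.mulVec p.2.1 i} := by
        ext p
        simp only [hT, Set.mem_setOf_eq, Set.mem_inter_iff, Set.mem_prod]
      rw [heqT]
      exact h1.inter_right h2
    have hTne : T.Nonempty := by
      obtain ⟨B0, hB0⟩ := hne
      refine ⟨(B0, (fun _ => (N:ℝ)⁻¹, 0)), ⟨hB0, ⟨fun i => by positivity, ?_⟩,
        ⟨le_refl 0, hDpos.le⟩⟩, fun i => ?_⟩
      · rw [Finset.sum_const, Finset.card_univ, Fintype.card_fin, nsmul_eq_mul]
        exact mul_inv_cancel₀ (by exact_mod_cast hN.ne')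
      · show (0:ℝ) * (N:ℝ)⁻¹ ≤ B0.mulVec (fun _ => (N:ℝ)⁻¹) i
        rw [zero_mul, Matrix.mulVec, dotProduct]
        exact Finset.sum_nonneg fun j _ => mul_nonneg (hpos B0 hB0 i j).le (by positivity)
    obtain ⟨phat, hphatT, hmax⟩ := hTcomp.exists_isMaxOn hTne
      (continuous_snd.comp continuous_snd).continuousOn
    obtain ⟨⟨hBS, ⟨hv0, hv1⟩, hlam0, hlamD⟩, hineq⟩ := hphatT
    set Bh := phat.1 with hBh
    set vh := phat.2.1 with hvh
    set lam := phat.2.2 with hlam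
    -- the key claim: lam dominates the action of every matrix in S on vh
    have hub : ∀ Bb ∈ S, ∀ i, Bb.mulVec vh i ≤ lam * vh i := by
      intro Bb hBb i
      by_contra hcon
      push_neg at hcon
      set B' := Bh.updateRow i (Bb i) with hB'
      have hB'S : B' ∈ S := by
        rw [hrows] at hBS hBb ⊢
        intro j
        by_cases hj : j = i
        · subst hj; rw [hB', Matrix.updateRow_self]; exact hBb j
        · rw [hB', Matrix.updateRow_ne hj]; exact hBS j
      have hB'pos : ∀ a b, 0 < B' a b := hpos B' hB'S
      have hmulne : ∀ j, j ≠ i → B'.mulVec vh j = Bh.mulVec vh j := by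
        intro j hj
        simp only [Matrix.mulVec, dotProduct, hB', Matrix.updateRow_ne hj]
      have hmuli : B'.mulVec vh i = Bb.mulVec vh i := by
        simp only [Matrix.mulVec, dotProduct, hB', Matrix.updateRow_self]
      have hle' : ∀ j, lam * vh j ≤ B'.mulVec vh j := by
        intro j
        by_cases hj : j = i
        · subst hj; rw [hmuli]; exact hcon.le
        · rw [hmulne j hj]; exact hineq j
      have hstrict : lam * vh i < B'.mulVec vh i := by rw [hmuli]; exact hcon
      obtain ⟨w, hw0, hw1, s, hslt, hsle⟩ := bump_aux hN hB'pos hv0 hv1 hle' i hstrict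
      have hsD : s ≤ D := t_le_bound hw0 hw1 (hCbd B' hB'S) hsle
      have hmem : (B', (w, s)) ∈ T :=
        ⟨⟨hB'S, ⟨hw0, hw1⟩, ⟨le_trans hlam0 hslt.le, hsD⟩⟩, hsle⟩
      have := hmax hmem
      simp only [hlam] at this
      exact absurd (lt_of_lt_of_le hslt this) (lt_irrefl lam)
    -- equality: vh is an eigenvector of Bh with eigenvalue lam
    have heq : Bh.mulVec vh = lam • vh := by
      funext j
      have := le_antisymm (hub Bh hBS j) (hineq j)
      simpa [smul_eq_mul] using this
    -- positivity facts
    obtain ⟨k0, hk0⟩ : ∃ k, 0 < vh k := by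
      by_contra hc
      push_neg at hc
      have : ∑ i, vh i = 0 := Finset.sum_eq_zero fun i _ => le_antisymm (hc i) (hv0 i)
      rw [hv1] at this; exact one_ne_zero this
    have hBvpos : ∀ j, 0 < Bh.mulVec vh j := by
      intro j
      rw [Matrix.mulVec, dotProduct]
      calc (0:ℝ) < Bh j k0 * vh k0 := mul_pos (hpos Bh hBS j k0) hk0
      _ ≤ ∑ k, Bh j k * vh k :=
          Finset.single_le_sum (fun k _ => mul_nonneg (hpos Bh hBS j k).le (hv0 k))
            (Finset.mem_univ k0)
    have hlampos : 0 < lam := by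
      have h1 := hBvpos k0
      have h2 : Bh.mulVec vh k0 = lam * vh k0 := by rw [heq]; simp [smul_eq_mul]
      rw [h2] at h1
      by_contra hc
      push_neg at hc
      nlinarith
    have hvpos : ∀ j, 0 < vh j := by
      intro j
      have h1 := hBvpos j
      have h2 : Bh.mulVec vh j = lam * vh j := by rw [heq]; simp [smul_eq_mul]
      rw [h2] at h1
      by_contra hc
      push_neg at hc
      nlinarith
    -- lam is at most the supremum of spectral radii
    have hbdd : BddAbove (specRad '' S) := by
      refine ⟨D, ?_⟩
      rintro r ⟨B, hB, rfl⟩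
      refine specRad_le_of_mulVec_le (fun i j => (hpos B hB i j).le)
        (fun _ => one_pos) hDpos.le fun i => ?_
      have h1 : B.mulVec (fun _ => (1:ℝ)) i = ∑ j, B i j := by
        simp [Matrix.mulVec, dotProduct]
      rw [h1, mul_one]
      calc ∑ j, B i j ≤ ∑ _j : Fin N, C := Finset.sum_le_sum fun j _ => hCbd B hB i j
      _ = N * C := by rw [Finset.sum_const, Finset.card_univ, Fintype.card_fin, nsmul_eq_mul]
    have hvne : vh ≠ 0 := by
      intro h
      have := congrFun h k0
      simp only [Pi.zero_apply] at this
      rw [this] at hk0; exact lt_irrefl 0 hk0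
    have hlamle : lam ≤ sSup (specRad '' S) :=
      le_trans (le_specRad_of_eigen hvne heq) (le_csSup hbdd ⟨Bh, hBS, rfl⟩)
    -- conclude via the product estimate
    set L := (List.ofFn A).reverse with hL
    have hLmem : ∀ M ∈ L, M ∈ S := by
      intro M hM
      rw [hL, List.mem_reverse] at hM
      obtain ⟨k, rfl⟩ := (List.mem_ofFn.mp hM)
      exact hA k
    obtain ⟨hP0, hPv⟩ := prod_mulVec_le (fun i => (hvpos i).le) hlampos.le L
      (fun M hM => ⟨fun i j => (hpos M (hLmem M hM) i j).le, fun i => hub M (hLmem M hM) i⟩)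
    have hlen : L.length = n := by rw [hL, List.length_reverse, List.length_ofFn]
    calc specRad L.prod ≤ lam ^ n := by
          refine specRad_le_of_mulVec_le hP0 hvpos (pow_nonneg hlampos.le n) fun i => ?_
          have := hPv i
          rw [hlen] at this
          exact this
    _ ≤ sSup (specRad '' S) ^ n := pow_le_pow_left₀ hlampos.le hlamle n
end

section
/- If 𝒜, ℬ ⊂ M(N,M) are H-sets of positive matrices, then the Minkowski sum 𝒜 + ℬ = {A + B : A ∈ 𝒜, B ∈ ℬ} is also an H-set of positive matrices. -/
open Matrix

/-- An H-set (hourglass set): a set of strictly positive matrices such that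
whenever `Ãu = v` with `Ã ∈ S` and `u, v > 0`, both hourglass conditions
H1 and H2 hold. -/
def IsHSet {N M : ℕ} (S : Set (Matrix (Fin N) (Fin M) ℝ)) : Prop :=
  (∀ A ∈ S, ∀ i j, 0 < A i j) ∧
  ∀ (u : Fin M → ℝ) (v : Fin N → ℝ), (∀ j, 0 < u j) → (∀ i, 0 < v i) →
    (∃ A ∈ S, A.mulVec u = v) →
    ((∀ A ∈ S, v ≤ A.mulVec u) ∨ ∃ B ∈ S, B.mulVec u ≤ v ∧ B.mulVec u ≠ v) ∧
    ((∀ A ∈ S, A.mulVec u ≤ v) ∨ ∃ B ∈ S, v ≤ B.mulVec u ∧ B.mulVec u ≠ v)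

theorem stmt_10 {N M : ℕ} (S T : Set (Matrix (Fin N) (Fin M) ℝ))
    (hS : IsHSet S) (hT : IsHSet T) :
    IsHSet {C | ∃ A ∈ S, ∃ B ∈ T, C = A + B} := by
  obtain ⟨hSpos, hSH⟩ := hS
  obtain ⟨hTpos, hTH⟩ := hT
  constructor
  · rintro C ⟨A, hA, B, hB, rfl⟩ i j
    exact add_pos (hSpos A hA i j) (hTpos B hB i j)
  · rintro u v hu hv ⟨C, ⟨A₀, hA₀, B₀, hB₀, rfl⟩, hCv⟩
    rcases Nat.eq_zero_or_pos N with hN | hN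
    · subst hN
      constructor
      · left; intro A _ i; exact absurd i.2 (by omega)
      · left; intro A _ i; exact absurd i.2 (by omega)
    rcases Nat.eq_zero_or_pos M with hM | hM
    · subst hM
      exfalso
      have h0 : v ⟨0, hN⟩ = 0 := by
        rw [← hCv]; simp [Matrix.mulVec, dotProduct]
      exact absurd (hv ⟨0, hN⟩) (by rw [h0]; exact lt_irrefl 0)
    have hMne : (Finset.univ : Finset (Fin M)).Nonempty :=
      ⟨⟨0, hM⟩, Finset.mem_univ _⟩
    have mvpos : ∀ (A : Matrix (Fin N) (Fin M) ℝ), (∀ i j, 0 < A i j) →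
        ∀ i, 0 < A.mulVec u i := by
      intro A hA i
      simp only [Matrix.mulVec, dotProduct]
      exact Finset.sum_pos (fun j _ => mul_pos (hA i j) (hu j)) hMne
    have hv₁ := mvpos A₀ (hSpos A₀ hA₀)
    have hv₂ := mvpos B₀ (hTpos B₀ hB₀)
    have hsum : A₀.mulVec u + B₀.mulVec u = v := by
      rw [← hCv, Matrix.add_mulVec]
    obtain ⟨hS1, hS2⟩ := hSH u (A₀.mulVec u) hu hv₁ ⟨A₀, hA₀, rfl⟩
    obtain ⟨hT1, hT2⟩ := hTH u (B₀.mulVec u) hu hv₂ ⟨B₀, hB₀, rfl⟩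
    constructor
    · rcases hS1 with h | ⟨A₁, hA₁, hle, hne⟩
      · rcases hT1 with h' | ⟨B₁, hB₁, hle, hne⟩
        · left
          rintro C ⟨A, hA, B, hB, rfl⟩
          rw [Matrix.add_mulVec, ← hsum]
          exact add_le_add (h A hA) (h' B hB)
        · right
          refine ⟨A₀ + B₁, ⟨A₀, hA₀, B₁, hB₁, rfl⟩, ?_, ?_⟩
          · rw [Matrix.add_mulVec, ← hsum]
            exact add_le_add le_rfl hle
          · rw [Matrix.add_mulVec, ← hsum]
            intro hc
            exact hne (add_left_cancel hc)
      · right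
        refine ⟨A₁ + B₀, ⟨A₁, hA₁, B₀, hB₀, rfl⟩, ?_, ?_⟩
        · rw [Matrix.add_mulVec, ← hsum]
          exact add_le_add hle le_rfl
        · rw [Matrix.add_mulVec, ← hsum]
          intro hc
          exact hne (add_right_cancel hc)
    · rcases hS2 with h | ⟨A₁, hA₁, hle, hne⟩
      · rcases hT2 with h' | ⟨B₁, hB₁, hle, hne⟩
        · left
          rintro C ⟨A, hA, B, hB, rfl⟩
          rw [Matrix.add_mulVec, ← hsum]
          exact add_le_add (h A hA) (h' B hB)
        · right
          refine ⟨A₀ + B₁, ⟨A₀, hA₀, B₁, hB₁, rfl⟩, ?_, ?_⟩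
          · rw [Matrix.add_mulVec, ← hsum]
            exact add_le_add le_rfl hle
          · rw [Matrix.add_mulVec, ← hsum]
            intro hc
            exact hne (add_left_cancel hc)
      · right
        refine ⟨A₁ + B₀, ⟨A₁, hA₁, B₀, hB₀, rfl⟩, ?_, ?_⟩
        · rw [Matrix.add_mulVec, ← hsum]
          exact add_le_add hle le_rfl
        · rw [Matrix.add_mulVec, ← hsum]
          intro hc
          exact hne (add_right_cancel hc)
end

section
/- Let 𝒜 be a bounded set of nonnegative N×N matrices. Then the lower spectral radius of the convex hull of 𝒜 equals the lower spectral radius of 𝒜: ρ̌(co(𝒜)) = ρ̌(𝒜). -/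
open Matrix

/-- Lower spectral radius (joint spectral subradius) of a set of matrices,
expressed via spectral radii of finite products. -/
noncomputable def lsr {N : ℕ} (S : Set (Matrix (Fin N) (Fin N) ℝ)) : ℝ :=
  sInf {r : ℝ | ∃ n : ℕ, 1 ≤ n ∧ ∃ A : Fin n → Matrix (Fin N) (Fin N) ℝ,
    (∀ i, A i ∈ S) ∧ r = specRad ((List.ofFn A).reverse.prod) ^ ((n : ℝ)⁻¹)}

namespace Aux15

open Polynomial Filter

variable {N : ℕ}

/-- Total entry sum of a matrix. -/
noncomputable def sig (M : Matrix (Fin N) (Fin N) ℝ) : ℝ := ∑ i, ∑ j, M i j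

lemma sig_add (M M' : Matrix (Fin N) (Fin N) ℝ) : sig (M + M') = sig M + sig M' := by
  simp [sig, Finset.sum_add_distrib]

lemma sig_smul (a : ℝ) (M : Matrix (Fin N) (Fin N) ℝ) : sig (a • M) = a * sig M := by
  simp [sig, Finset.mul_sum]

lemma sig_nonneg {M : Matrix (Fin N) (Fin N) ℝ} (h : ∀ i j, 0 ≤ M i j) : 0 ≤ sig M := by
  apply Finset.sum_nonneg; intro i _; exact Finset.sum_nonneg fun j _ => h i j

lemma sig_one : sig (1 : Matrix (Fin N) (Fin N) ℝ) = N := by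
  simp [sig, Matrix.one_apply]

/-- The set of root-moduli defining `specRad`. -/
def rootAbsSet (A : Matrix (Fin N) (Fin N) ℝ) : Set ℝ :=
  {r : ℝ | ∃ μ : ℂ, (A.map Complex.ofReal).charpoly.IsRoot μ ∧ r = ‖μ‖}

lemma specRad_eq (A : Matrix (Fin N) (Fin N) ℝ) : specRad A = sSup (rootAbsSet A) := rfl

lemma rootAbsSet_finite (A : Matrix (Fin N) (Fin N) ℝ) : (rootAbsSet A).Finite := by
  have h1 : {μ : ℂ | (A.map Complex.ofReal).charpoly.IsRoot μ}.Finite :=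
    Polynomial.finite_setOf_isRoot (Matrix.charpoly_monic _).ne_zero
  have : rootAbsSet A = (fun μ : ℂ => ‖μ‖) ''
      {μ : ℂ | (A.map Complex.ofReal).charpoly.IsRoot μ} := by
    ext r
    constructor
    · rintro ⟨μ, h, rfl⟩; exact ⟨μ, h, rfl⟩
    · rintro ⟨μ, h, rfl⟩; exact ⟨μ, h, rfl⟩
  rw [this]
  exact h1.image _

lemma bddAbove_rootAbsSet (A : Matrix (Fin N) (Fin N) ℝ) : BddAbove (rootAbsSet A) :=
  (rootAbsSet_finite A).bddAbove

lemma specRad_nonneg (A : Matrix (Fin N) (Fin N) ℝ) : 0 ≤ specRad A := by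
  apply Real.sSup_nonneg
  rintro r ⟨μ, _, rfl⟩
  exact norm_nonneg μ

lemma charpoly_eval (M : Matrix (Fin N) (Fin N) ℂ) (μ : ℂ) :
    M.charpoly.eval μ = (Matrix.scalar (Fin N) μ - M).det := by
  rw [Matrix.charpoly, eval_det, matPolyEquiv_charmatrix]
  simp

lemma isRoot_iff_det (M : Matrix (Fin N) (Fin N) ℂ) (μ : ℂ) :
    M.charpoly.IsRoot μ ↔ (Matrix.scalar (Fin N) μ - M).det = 0 := by
  rw [Polynomial.IsRoot, charpoly_eval]

/-- Any root of the charpoly of the complexification of a nonnegative matrix has modulus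
at most the total entry sum. -/
lemma root_abs_le_sig {P : Matrix (Fin N) (Fin N) ℝ} (hP : ∀ i j, 0 ≤ P i j) {μ : ℂ}
    (hμ : (P.map Complex.ofReal).charpoly.IsRoot μ) : ‖μ‖ ≤ sig P := by
  set Pc := P.map Complex.ofReal with hPc
  have hdet : (Matrix.scalar (Fin N) μ - Pc).det = 0 := by
    rw [← charpoly_eval]; exact hμ
  obtain ⟨v, hv0, hv⟩ := (Matrix.exists_mulVec_eq_zero_iff).mpr hdet
  have hev : Pc.mulVec v = μ • v := by
    have h2 : (Matrix.scalar (Fin N) μ).mulVec v = μ • v := by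
      ext i; simp [Matrix.mulVec_diagonal]
    have h1 : (Matrix.scalar (Fin N) μ).mulVec v - Pc.mulVec v = 0 := by
      rw [← Matrix.sub_mulVec]; exact hv
    rw [h2, sub_eq_zero] at h1
    exact h1.symm
  obtain ⟨j0, hj0⟩ : ∃ j, v j ≠ 0 := Function.ne_iff.mp hv0
  obtain ⟨i0, _, hi0⟩ := Finset.exists_max_image Finset.univ (fun i => ‖v i‖)
    ⟨j0, Finset.mem_univ j0⟩
  have hvi0 : 0 < ‖v i0‖ :=
    lt_of_lt_of_le (by simpa using hj0) (hi0 j0 (Finset.mem_univ j0))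
  have hrow : ‖μ‖ * ‖v i0‖ ≤ sig P * ‖v i0‖ := by
    have h3 : (Pc.mulVec v) i0 = μ * v i0 := by rw [hev]; simp
    have h4 : ‖μ * v i0‖ ≤ ∑ j, P i0 j * ‖v j‖ := by
      rw [← h3]
      unfold Matrix.mulVec dotProduct
      refine le_trans (norm_sum_le _ _) ?_
      apply Finset.sum_le_sum
      intro j _
      rw [norm_mul]
      simp only [hPc, Matrix.map_apply, Complex.norm_real, Real.norm_eq_abs, abs_of_nonneg (hP i0 j)]
      exact le_refl _
    have h5 : ∑ j, P i0 j * ‖v j‖ ≤ ∑ j, P i0 j * ‖v i0‖ :=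
      Finset.sum_le_sum fun j _ =>
        mul_le_mul_of_nonneg_left (hi0 j (Finset.mem_univ j)) (hP i0 j)
    have h6 : ∑ j, P i0 j * ‖v i0‖ = (∑ j, P i0 j) * ‖v i0‖ := by
      rw [Finset.sum_mul]
    have h7 : (∑ j, P i0 j) ≤ sig P := by
      apply Finset.single_le_sum (f := fun i => ∑ j, P i j) (fun i _ => Finset.sum_nonneg
        fun j _ => hP i j) (Finset.mem_univ i0)
    calc ‖μ‖ * ‖v i0‖ = ‖μ * v i0‖ := (norm_mul _ _).symm
      _ ≤ ∑ j, P i0 j * ‖v j‖ := h4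
      _ ≤ (∑ j, P i0 j) * ‖v i0‖ := by rw [← h6]; exact h5
      _ ≤ sig P * ‖v i0‖ :=
          mul_le_mul_of_nonneg_right h7 (norm_nonneg _)
  exact le_of_mul_le_mul_right hrow hvi0

lemma specRad_le_sig {P : Matrix (Fin N) (Fin N) ℝ} (hP : ∀ i j, 0 ≤ P i j) :
    specRad P ≤ sig P := by
  apply Real.sSup_le _ (sig_nonneg hP)
  rintro r ⟨μ, hμ, rfl⟩
  exact root_abs_le_sig hP hμ

section LsrBasic

variable (S : Set (Matrix (Fin N) (Fin N) ℝ))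

/-- The defining set of `lsr`. -/
def lsrSet : Set ℝ :=
  {r : ℝ | ∃ n : ℕ, 1 ≤ n ∧ ∃ A : Fin n → Matrix (Fin N) (Fin N) ℝ,
    (∀ i, A i ∈ S) ∧ r = specRad ((List.ofFn A).reverse.prod) ^ ((n : ℝ)⁻¹)}

lemma lsr_eq : lsr S = sInf (lsrSet S) := rfl

lemma lsrSet_nonneg : ∀ r ∈ lsrSet S, 0 ≤ r := by
  rintro r ⟨n, hn, A, hA, rfl⟩
  exact Real.rpow_nonneg (specRad_nonneg _) _

lemma bddBelow_lsrSet : BddBelow (lsrSet S) :=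
  ⟨0, fun r hr => lsrSet_nonneg S r hr⟩

lemma lsr_nonneg : 0 ≤ lsr S :=
  Real.sInf_nonneg (lsrSet_nonneg S)

/-- `lsr S` lower-bounds `specRad` of products of elements of `S`. -/
lemma pow_lsr_le_specRad {L : List (Matrix (Fin N) (Fin N) ℝ)} (hL : L ≠ [])
    (hmem : ∀ X ∈ L, X ∈ S) : lsr S ^ L.length ≤ specRad (L.reverse.prod) := by
  have hlen : 1 ≤ L.length := List.length_pos_iff.mpr hL
  have hmem' : specRad (L.reverse.prod) ^ ((L.length : ℝ)⁻¹) ∈ lsrSet S := by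
    refine ⟨L.length, hlen, fun i => L.get i, fun i => hmem _ (L.get_mem _), ?_⟩
    rw [List.ofFn_get]
  have h1 : lsr S ≤ specRad (L.reverse.prod) ^ ((L.length : ℝ)⁻¹) :=
    csInf_le (bddBelow_lsrSet S) hmem'
  have hs : 0 ≤ specRad (L.reverse.prod) := specRad_nonneg _
  have hne : (L.length : ℝ) ≠ 0 := by positivity
  calc lsr S ^ L.length ≤ (specRad (L.reverse.prod) ^ ((L.length : ℝ)⁻¹)) ^ L.length :=
        pow_le_pow_left₀ (lsr_nonneg S) h1 _
    _ = specRad (L.reverse.prod) := by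
        rw [← Real.rpow_natCast (specRad (L.reverse.prod) ^ ((L.length : ℝ)⁻¹)) L.length,
          ← Real.rpow_mul hs, inv_mul_cancel₀ hne, Real.rpow_one]

end LsrBasic

/-- Linear inequalities valid on `S` extend to its convex hull. -/
lemma convexHull_le {S : Set (Matrix (Fin N) (Fin N) ℝ)} {f : Matrix (Fin N) (Fin N) ℝ → ℝ}
    (hadd : ∀ x y, f (x + y) = f x + f y) (hsmul : ∀ (a : ℝ) x, f (a • x) = a * f x)
    {t : ℝ} (h : ∀ A ∈ S, t ≤ f A) : ∀ B ∈ convexHull ℝ S, t ≤ f B := by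
  have hconv : Convex ℝ {X : Matrix (Fin N) (Fin N) ℝ | t ≤ f X} := by
    intro x hx y hy a b ha hb hab
    simp only [Set.mem_setOf_eq] at hx hy ⊢
    have : f (a • x + b • y) = a * f x + b * f y := by rw [hadd, hsmul, hsmul]
    rw [this]
    calc t = a * t + b * t := by rw [← add_mul, hab, one_mul]
      _ ≤ a * f x + b * f y :=
        add_le_add (mul_le_mul_of_nonneg_left hx ha) (mul_le_mul_of_nonneg_left hy hb)
  exact fun B hB => convexHull_min h hconv hB

lemma convexHull_nonneg_entries {S : Set (Matrix (Fin N) (Fin N) ℝ)}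
    (hnn : ∀ A ∈ S, ∀ i j, 0 ≤ A i j) :
    ∀ B ∈ convexHull ℝ S, ∀ i j, 0 ≤ B i j := by
  intro B hB i j
  exact convexHull_le (f := fun X => X i j) (fun x y => rfl) (fun a x => rfl)
    (fun A hA => hnn A hA i j) B hB

lemma list_prod_nonneg {L : List (Matrix (Fin N) (Fin N) ℝ)}
    (h : ∀ X ∈ L, ∀ i j, 0 ≤ X i j) : ∀ i j, 0 ≤ L.prod i j := by
  induction L with
  | nil => intro i j; simp [Matrix.one_apply]; positivity
  | cons X T ih =>
      intro i j
      rw [List.prod_cons]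
      have hX := h X List.mem_cons_self
      have hT : ∀ Y ∈ T, ∀ i j, 0 ≤ Y i j := fun Y hY => h Y (List.mem_cons_of_mem _ hY)
      rw [Matrix.mul_apply]
      exact Finset.sum_nonneg fun k _ => mul_nonneg (hX i k) (ih hT k j)

/-- The key replacement induction: products with factors in the convex hull still satisfy
the entry-sum lower bound. -/
lemma key_induction {S : Set (Matrix (Fin N) (Fin N) ℝ)} (hnn : ∀ A ∈ S, ∀ i j, 0 ≤ A i j)
    (hN : 0 < N) :
    ∀ L2 L1 L3 : List (Matrix (Fin N) (Fin N) ℝ),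
      (∀ X ∈ L1, X ∈ S) → (∀ X ∈ L2, X ∈ convexHull ℝ S) → (∀ X ∈ L3, X ∈ S) →
      lsr S ^ (L1.length + L2.length + L3.length) ≤ sig ((L1 ++ L2 ++ L3).reverse.prod) := by
  intro L2
  induction L2 with
  | nil =>
    intro L1 L3 h1 _ h3
    have hmem : ∀ X ∈ L1 ++ ([] : List (Matrix (Fin N) (Fin N) ℝ)) ++ L3, X ∈ S := by
      intro X hX
      simp only [List.append_nil, List.mem_append] at hX
      rcases hX with hX | hX
      · exact h1 X hX
      · exact h3 X hX
    rcases eq_or_ne (L1 ++ ([] : List (Matrix (Fin N) (Fin N) ℝ)) ++ L3) [] with hnil | hne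
    · rw [hnil]
      have hlen : L1.length + ([] : List (Matrix (Fin N) (Fin N) ℝ)).length + L3.length = 0 := by
        have := congrArg List.length hnil; simpa using this
      rw [hlen, pow_zero]
      simp only [List.reverse_nil, List.prod_nil, sig_one]
      exact_mod_cast hN
    · have hlen : L1.length + ([] : List (Matrix (Fin N) (Fin N) ℝ)).length + L3.length
          = (L1 ++ ([] : List (Matrix (Fin N) (Fin N) ℝ)) ++ L3).length := by
        simp
      rw [hlen]
      have hnn' : ∀ i j, 0 ≤ (L1 ++ ([] : List (Matrix (Fin N) (Fin N) ℝ)) ++ L3).reverse.prod i j := by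
        apply list_prod_nonneg
        intro X hX
        exact hnn X (hmem X (List.mem_reverse.mp hX))
      exact le_trans (pow_lsr_le_specRad S hne hmem) (specRad_le_sig hnn')
  | cons X T ih =>
    intro L1 L3 h1 h2 h3
    have hrw : ∀ Y : Matrix (Fin N) (Fin N) ℝ,
        (L1 ++ (Y :: T) ++ L3).reverse.prod
          = L3.reverse.prod * (T.reverse.prod * Y) * L1.reverse.prod := by
      intro Y
      simp [List.reverse_append, List.reverse_cons, List.prod_append, List.prod_cons, mul_assoc]
    have hrw2 : ∀ Y : Matrix (Fin N) (Fin N) ℝ,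
        ((L1 ++ [Y]) ++ T ++ L3).reverse.prod
          = L3.reverse.prod * (T.reverse.prod * Y) * L1.reverse.prod := by
      intro Y
      simp [List.reverse_append, List.reverse_cons, List.prod_append, List.prod_cons, mul_assoc]
    have hf : ∀ B ∈ convexHull ℝ S,
        lsr S ^ (L1.length + (X :: T).length + L3.length)
          ≤ sig (L3.reverse.prod * (T.reverse.prod * B) * L1.reverse.prod) := by
      apply convexHull_le (f := fun B =>
        sig (L3.reverse.prod * (T.reverse.prod * B) * L1.reverse.prod))
      · intro x y
        rw [mul_add, mul_add, add_mul, sig_add]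
      · intro a x
        rw [mul_smul_comm, mul_smul_comm, smul_mul_assoc, sig_smul]
      · intro A hA
        have h1' : ∀ Y ∈ L1 ++ [A], Y ∈ S := by
          intro Y hY
          rcases List.mem_append.mp hY with hY | hY
          · exact h1 Y hY
          · rw [List.mem_singleton.mp hY]; exact hA
        have h2' : ∀ Y ∈ T, Y ∈ convexHull ℝ S := fun Y hY => h2 Y (List.mem_cons_of_mem _ hY)
        have := ih (L1 ++ [A]) L3 h1' h2' h3
        rw [hrw2 A] at this
        have hexp : (L1 ++ [A]).length + T.length + L3.length
            = L1.length + (X :: T).length + L3.length := by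
          simp; omega
        rw [hexp] at this
        exact this
    have := hf X (h2 X List.mem_cons_self)
    rw [hrw X]
    exact this

/-- Powers of a product of convex-hull elements obey the entry-sum bound. -/
lemma sig_pow_bound {S : Set (Matrix (Fin N) (Fin N) ℝ)} (hnn : ∀ A ∈ S, ∀ i j, 0 ≤ A i j)
    (hN : 0 < N) {L : List (Matrix (Fin N) (Fin N) ℝ)}
    (hL : ∀ X ∈ L, X ∈ convexHull ℝ S) (k : ℕ) :
    (lsr S ^ L.length) ^ k ≤ sig ((L.reverse.prod) ^ k) := by
  have hex : ∃ Lk : List (Matrix (Fin N) (Fin N) ℝ), (∀ X ∈ Lk, X ∈ convexHull ℝ S) ∧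
      Lk.length = k * L.length ∧ Lk.reverse.prod = (L.reverse.prod) ^ k := by
    induction k with
    | zero => exact ⟨[], by simp, by simp, by simp⟩
    | succ k ih =>
      obtain ⟨Lk, hmem, hlen, hprod⟩ := ih
      refine ⟨L ++ Lk, ?_, ?_, ?_⟩
      · intro X hX
        rcases List.mem_append.mp hX with h | h
        · exact hL X h
        · exact hmem X h
      · simp [hlen]; ring
      · rw [List.reverse_append, List.prod_append, hprod, pow_succ]
  obtain ⟨Lk, hmem, hlen, hprod⟩ := hex
  have hkey := key_induction hnn hN Lk [] [] (by simp) hmem (by simp)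
  simp only [List.nil_append, List.append_nil, List.length_nil, Nat.add_zero, Nat.zero_add]
    at hkey
  rw [hprod, hlen] at hkey
  rw [← pow_mul, mul_comm]
  exact hkey

lemma coord_norm_le (x : EuclideanSpace ℂ (Fin N)) (i : Fin N) : ‖x i‖ ≤ ‖x‖ := by
  rw [EuclideanSpace.norm_eq]
  have h : ‖x i‖ ^ 2 ≤ ∑ j, ‖x j‖ ^ 2 :=
    Finset.single_le_sum (f := fun j => ‖x j‖ ^ 2) (fun j _ => by positivity) (Finset.mem_univ i)
  calc ‖x i‖ = Real.sqrt (‖x i‖ ^ 2) := (Real.sqrt_sq (norm_nonneg _)).symm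
    _ ≤ _ := Real.sqrt_le_sqrt h

lemma entry_norm_le_clm_norm (B : Matrix (Fin N) (Fin N) ℂ) (i j : Fin N) :
    ‖B i j‖ ≤ ‖Matrix.toEuclideanCLM (𝕜 := ℂ) B‖ := by
  set x : EuclideanSpace ℂ (Fin N) := EuclideanSpace.single j 1 with hxdef
  have hx : ‖x‖ = 1 := by simp [hxdef, EuclideanSpace.norm_single]
  have h2 : ((Matrix.toEuclideanCLM (𝕜 := ℂ) B) x) i = B i j := by
    rw [hxdef, ← EuclideanSpace.toLp_single]
    rw [Matrix.toEuclideanCLM_toLp]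
    simp [Matrix.mulVec_single]
  calc ‖B i j‖ = ‖((Matrix.toEuclideanCLM (𝕜 := ℂ) B) x) i‖ := by rw [h2]
    _ ≤ ‖(Matrix.toEuclideanCLM (𝕜 := ℂ) B) x‖ := coord_norm_le _ i
    _ ≤ ‖Matrix.toEuclideanCLM (𝕜 := ℂ) B‖ * ‖x‖ := ContinuousLinearMap.le_opNorm _ _
    _ = _ := by rw [hx, mul_one]

/-- Main analytic bound: a nonnegative matrix whose powers all have large entry sums has
large spectral radius. -/
lemma spectrum_matrix_eq_roots (Mc : Matrix (Fin N) (Fin N) ℂ) :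
    spectrum ℂ Mc = {μ : ℂ | Mc.charpoly.IsRoot μ} := by
  ext μ
  rw [spectrum.mem_iff, Set.mem_setOf_eq, isRoot_iff_det]
  have halg : (algebraMap ℂ (Matrix (Fin N) (Fin N) ℂ)) μ = Matrix.scalar (Fin N) μ := by
    simp [Matrix.scalar, Matrix.algebraMap_eq_diagonal]
  rw [halg]
  constructor
  · intro h
    by_contra hne
    exact h ((Matrix.isUnit_iff_isUnit_det _).mpr (isUnit_iff_ne_zero.mpr hne))
  · intro h hU
    have := (Matrix.isUnit_iff_isUnit_det _).mp hU
    rw [h] at this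
    exact (not_isUnit_zero : ¬IsUnit (0 : ℂ)) this

lemma mul_nonneg_entries {A B : Matrix (Fin N) (Fin N) ℝ} (hA : ∀ i j, 0 ≤ A i j)
    (hB : ∀ i j, 0 ≤ B i j) : ∀ i j, 0 ≤ (A * B) i j := by
  intro i j
  rw [Matrix.mul_apply]
  exact Finset.sum_nonneg fun k _ => mul_nonneg (hA i k) (hB k j)

lemma pow_nonneg_entries {M : Matrix (Fin N) (Fin N) ℝ} (hM : ∀ i j, 0 ≤ M i j) (k : ℕ) :
    ∀ i j, 0 ≤ (M ^ k) i j := by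
  induction k with
  | zero => intro i j; simp [Matrix.one_apply]; positivity
  | succ k ih =>
      rw [pow_succ]
      exact mul_nonneg_entries ih hM

lemma map_pow_ofReal (M : Matrix (Fin N) (Fin N) ℝ) (k : ℕ) :
    (M ^ k).map Complex.ofReal = (M.map Complex.ofReal) ^ k := by
  induction k with
  | zero =>
      ext i j
      simp [Matrix.map_apply, Matrix.one_apply, apply_ite Complex.ofReal]
  | succ k ih =>
      rw [pow_succ, pow_succ, ← ih]
      ext i j
      simp [Matrix.map_apply, Matrix.mul_apply]

/-- Main analytic bound: a nonnegative matrix whose powers all have large entry sums has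
large spectral radius. -/
lemma le_specRad_of_sig_pow {M : Matrix (Fin N) (Fin N) ℝ} (hM : ∀ i j, 0 ≤ M i j)
    (hN : 0 < N) {d : ℝ} (hd : 0 ≤ d) (hσ : ∀ k : ℕ, d ^ k ≤ sig (M ^ k)) :
    d ≤ specRad M := by
  rcases eq_or_lt_of_le hd with hd0 | hdpos
  · rw [← hd0]; exact specRad_nonneg M
  set Mc := M.map Complex.ofReal with hMc
  set a := Matrix.toEuclideanCLM (𝕜 := ℂ) Mc with ha
  have hpow : ∀ k : ℕ, a ^ k = Matrix.toEuclideanCLM (𝕜 := ℂ) ((M ^ k).map Complex.ofReal) := by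
    intro k
    rw [ha, ← map_pow, map_pow_ofReal]
  have hnorm : ∀ k : ℕ, d ^ k ≤ (N : ℝ) ^ 2 * ‖a ^ k‖ := by
    intro k
    refine le_trans (hσ k) ?_
    have h1 : ∀ i j : Fin N, (M ^ k) i j ≤ ‖a ^ k‖ := by
      intro i j
      have h2 := entry_norm_le_clm_norm ((M ^ k).map Complex.ofReal) i j
      rw [← hpow k] at h2
      have h3 : ‖((M ^ k).map Complex.ofReal) i j‖ = (M ^ k) i j := by
        simp [Matrix.map_apply, Complex.norm_real, abs_of_nonneg (pow_nonneg_entries hM k i j)]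
      rw [h3] at h2
      exact h2
    calc sig (M ^ k) ≤ ∑ _i : Fin N, ∑ _j : Fin N, ‖a ^ k‖ := by
          apply Finset.sum_le_sum
          intro i _
          exact Finset.sum_le_sum fun j _ => h1 i j
      _ = (N : ℝ) ^ 2 * ‖a ^ k‖ := by
          rw [Finset.sum_const, Finset.sum_const, Finset.card_univ, Fintype.card_fin,
            nsmul_eq_mul, nsmul_eq_mul]
          push_cast
          ring
  -- Gelfand's formula gives a lower bound on the spectral radius
  have hsr : ENNReal.ofReal d ≤ spectralRadius ℂ a := by
    by_contra hlt
    push_neg at hlt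
    have hfin : spectralRadius ℂ a ≠ ⊤ := hlt.ne_top
    set s := (spectralRadius ℂ a).toReal with hs
    have hslt : s < d := (ENNReal.lt_ofReal_iff_toReal_lt hfin).mp hlt
    set t := max (d / 2) ((s + d) / 2) with htdef
    have ht0 : 0 < t := lt_of_lt_of_le (half_pos hdpos) (le_max_left _ _)
    have htd : t < d := max_lt (half_lt_self hdpos) (by linarith)
    have hst : s < t := lt_of_lt_of_le (by linarith) (le_max_right _ _)
    have hev1 : ∀ᶠ k : ℕ in Filter.atTop,
        (‖a ^ k‖₊ : ENNReal) ^ (1 / (k : ℝ)) < ENNReal.ofReal t := by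
      have htend := spectrum.pow_nnnorm_pow_one_div_tendsto_nhds_spectralRadius a
      have hlt' : spectralRadius ℂ a < ENNReal.ofReal t := by
        rw [ENNReal.lt_ofReal_iff_toReal_lt hfin]; exact hst
      exact htend.eventually_lt_const hlt'
    have hev2 : ∀ᶠ k : ℕ in Filter.atTop, (N : ℝ) ^ 2 < (d / t) ^ k := by
      have hdt : 1 < d / t := (one_lt_div ht0).mpr htd
      exact (tendsto_pow_atTop_atTop_of_one_lt hdt).eventually_gt_atTop _
    obtain ⟨k, hk⟩ := ((hev1.and hev2).and (Filter.eventually_ge_atTop 1)).exists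
    obtain ⟨⟨hka, hkb⟩, hk1⟩ := hk
    have hk0 : (k : ℝ) ≠ 0 := by positivity
    -- from hka deduce ‖a ^ k‖ ≤ t ^ k
    have h5 : (‖a ^ k‖₊ : ENNReal) ≤ ENNReal.ofReal (t ^ k) := by
      have h6 := ENNReal.rpow_le_rpow hka.le (le_of_lt (by positivity : (0:ℝ) < (k:ℝ)))
      rw [← ENNReal.rpow_mul, one_div, inv_mul_cancel₀ hk0, ENNReal.rpow_one] at h6
      rw [ENNReal.ofReal_rpow_of_pos ht0, Real.rpow_natCast] at h6
      exact h6
    have h7 : ‖a ^ k‖ ≤ t ^ k := by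
      have h8 := ENNReal.toReal_mono (by simp) h5
      rw [ENNReal.coe_toReal, ENNReal.toReal_ofReal (by positivity)] at h8
      exact h8
    have h9 : d ^ k ≤ (N : ℝ) ^ 2 * t ^ k :=
      le_trans (hnorm k) (mul_le_mul_of_nonneg_left h7 (by positivity))
    have h10 : (d / t) ^ k * t ^ k = d ^ k := by
      rw [div_pow, div_mul_cancel₀]
      positivity
    have h11 : (N : ℝ) ^ 2 * t ^ k < (d / t) ^ k * t ^ k :=
      mul_lt_mul_of_pos_right hkb (by positivity)
    rw [h10] at h11
    linarith
  -- convert the spectral radius bound to a charpoly-root bound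
  have hspec : spectrum ℂ a = {μ : ℂ | Mc.charpoly.IsRoot μ} := by
    rw [ha, AlgEquiv.spectrum_eq (Matrix.toEuclideanCLM (𝕜 := ℂ) (n := Fin N)) Mc,
      spectrum_matrix_eq_roots]
  have hfinroots : {μ : ℂ | Mc.charpoly.IsRoot μ}.Finite :=
    Polynomial.finite_setOf_isRoot (Matrix.charpoly_monic _).ne_zero
  have hnonempty : ∃ μ : ℂ, Mc.charpoly.IsRoot μ := by
    apply Complex.exists_root
    have hdeg : Mc.charpoly.natDegree = N := by
      rw [Matrix.charpoly_natDegree_eq_dim, Fintype.card_fin]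
    rw [Polynomial.degree_eq_natDegree (Matrix.charpoly_monic _).ne_zero, hdeg]
    exact_mod_cast hN
  obtain ⟨μ, hμ⟩ := hnonempty
  obtain ⟨μ0, hμ0mem, hμ0max⟩ := Finset.exists_max_image hfinroots.toFinset
    (fun μ => ‖μ‖) ⟨μ, hfinroots.mem_toFinset.mpr hμ⟩
  have hμ0root : Mc.charpoly.IsRoot μ0 := hfinroots.mem_toFinset.mp hμ0mem
  have hub : spectralRadius ℂ a ≤ (‖μ0‖₊ : ENNReal) := by
    rw [spectralRadius]
    apply iSup₂_le
    intro ν hν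
    rw [hspec] at hν
    have : ‖ν‖ ≤ ‖μ0‖ :=
      hμ0max ν (hfinroots.mem_toFinset.mpr hν)
    rw [ENNReal.coe_le_coe]
    exact_mod_cast this
  have hd0 : d ≤ ‖μ0‖ := by
    have h := le_trans hsr hub
    have h2 := (ENNReal.ofReal_le_iff_le_toReal (by simp)).mp h
    rw [ENNReal.coe_toReal, coe_nnnorm] at h2
    exact h2
  refine le_trans hd0 ?_
  apply le_csSup (bddAbove_rootAbsSet M)
  exact ⟨μ0, hμ0root, rfl⟩

end Aux15

theorem stmt_15 {N : ℕ} (S : Set (Matrix (Fin N) (Fin N) ℝ))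
    (hb : ∃ C, ∀ A ∈ S, ∀ i j, |A i j| ≤ C)
    (hnn : ∀ A ∈ S, ∀ i j, 0 ≤ A i j) :
    lsr (convexHull ℝ S) = lsr S := by
  classical
  rcases Set.eq_empty_or_nonempty S with rfl | hSne
  · rw [convexHull_empty]
  by_cases hN : N = 0
  · -- degenerate case: 0×0 matrices
    subst hN
    have hspec0 : ∀ A : Matrix (Fin 0) (Fin 0) ℝ, specRad A = 0 := by
      intro A
      have hset : {r : ℝ | ∃ μ : ℂ, (A.map Complex.ofReal).charpoly.IsRoot μ ∧
          r = ‖μ‖} = ∅ := by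
        ext r
        simp only [Set.mem_setOf_eq, Set.mem_empty_iff_false, iff_false, not_exists]
        rintro μ ⟨hμ, _⟩
        have hdeg : (A.map Complex.ofReal).charpoly.natDegree = 0 := by
          rw [Matrix.charpoly_natDegree_eq_dim, Fintype.card_fin]
        have hone : (A.map Complex.ofReal).charpoly = 1 :=
          (Matrix.charpoly_monic _).natDegree_eq_zero.mp hdeg
        rw [hone] at hμ
        simp [Polynomial.IsRoot] at hμ
      unfold specRad
      rw [hset, Real.sSup_empty]
    have hlsr0 : ∀ S' : Set (Matrix (Fin 0) (Fin 0) ℝ), S'.Nonempty → lsr S' = 0 := by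
      rintro S' ⟨A, hA⟩
      have hset : Aux15.lsrSet S' = {0} := by
        ext r
        constructor
        · rintro ⟨n, hn, B, hB, rfl⟩
          have hninv : ((n : ℝ)⁻¹ : ℝ) ≠ 0 := inv_ne_zero (Nat.cast_ne_zero.mpr (by omega))
          simp [hspec0, Real.zero_rpow hninv]
        · rintro rfl
          refine ⟨1, le_refl 1, fun _ => A, fun _ => hA, ?_⟩
          have hninv : (((1:ℕ) : ℝ)⁻¹ : ℝ) ≠ 0 := by norm_num
          rw [hspec0, Real.zero_rpow hninv]
      rw [Aux15.lsr_eq, hset, csInf_singleton]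
    rw [hlsr0 _ (hSne.mono (subset_convexHull ℝ S)), hlsr0 S hSne]
  · have hN' : 0 < N := Nat.pos_of_ne_zero hN
    obtain ⟨A0, hA0⟩ := hSne
    have hmemS : specRad ((List.ofFn fun _ : Fin 1 => A0).reverse.prod) ^ (((1:ℕ) : ℝ)⁻¹)
        ∈ Aux15.lsrSet S := ⟨1, le_refl 1, fun _ => A0, fun _ => hA0, rfl⟩
    apply le_antisymm
    · -- easy direction: S ⊆ convexHull S
      rw [Aux15.lsr_eq, Aux15.lsr_eq]
      apply csInf_le_csInf (Aux15.bddBelow_lsrSet _) ⟨_, hmemS⟩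
      rintro r ⟨n, hn, B, hB, rfl⟩
      exact ⟨n, hn, B, fun i => subset_convexHull ℝ S (hB i), rfl⟩
    · -- hard direction
      rw [Aux15.lsr_eq (convexHull ℝ S)]
      apply le_csInf
      · exact ⟨_, 1, le_refl 1, fun _ => A0, fun _ => subset_convexHull ℝ S hA0, rfl⟩
      · rintro r ⟨n, hn, B, hB, rfl⟩
        set L := List.ofFn B with hL
        have hLlen : L.length = n := List.length_ofFn
        have hLmem : ∀ X ∈ L, X ∈ convexHull ℝ S := by
          intro X hX
          obtain ⟨i, rfl⟩ := Set.mem_range.mp ((List.mem_ofFn' B X).mp (hL ▸ hX))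
          exact hB i
        have hMnn : ∀ i j, 0 ≤ L.reverse.prod i j := by
          apply Aux15.list_prod_nonneg
          intro X hX
          exact Aux15.convexHull_nonneg_entries hnn X (hLmem X (List.mem_reverse.mp hX))
        have hσ : ∀ k : ℕ, (lsr S ^ n) ^ k ≤ Aux15.sig ((L.reverse.prod) ^ k) := by
          intro k
          have := Aux15.sig_pow_bound hnn hN' hLmem k
          rwa [hLlen] at this
        have hkey : lsr S ^ n ≤ specRad (L.reverse.prod) :=
          Aux15.le_specRad_of_sig_pow hMnn hN' (pow_nonneg (Aux15.lsr_nonneg S) n) hσ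
        have hn0 : ((n : ℝ) : ℝ) ≠ 0 := Nat.cast_ne_zero.mpr (by omega)
        calc lsr S = (lsr S ^ n) ^ ((n : ℝ)⁻¹) := by
              rw [← Real.rpow_natCast (lsr S) n, ← Real.rpow_mul (Aux15.lsr_nonneg S),
                mul_inv_cancel₀ hn0, Real.rpow_one]
          _ ≤ specRad (L.reverse.prod) ^ ((n : ℝ)⁻¹) :=
              Real.rpow_le_rpow (pow_nonneg (Aux15.lsr_nonneg S) n) hkey (by positivity)
end

section
/- Let 𝒜 be a bounded set of nonnegative N×N matrices, n ≥ 1, and suppose each A_i (i = 1,…,n) is a finite convex combination of matrices from 𝒜. Then ‖A_n ⋯ A_1‖₁ ≥ (1/N)·inf{ρ(B_n⋯B_1) : B_1,…,B_n ∈ 𝒜}, where ‖M‖₁ is the operator norm induced by the ℓ¹ vector norm. -/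
open Matrix

/-- Operator norm of a real square matrix induced by the `ℓ¹` vector norm:
the maximum of the absolute column sums. -/
noncomputable def l1OpNorm {N : ℕ} (A : Matrix (Fin N) (Fin N) ℝ) : ℝ :=
  sSup {r : ℝ | ∃ j, r = ∑ i, |A i j|}

namespace Stmt16Aux

variable {N : ℕ}

/-- The entry-sum as a linear functional. -/
noncomputable def total (N : ℕ) : Matrix (Fin N) (Fin N) ℝ →ₗ[ℝ] ℝ where
  toFun M := ∑ i, ∑ j, M i j
  map_add' M P := by simp [Matrix.add_apply, Finset.sum_add_distrib]
  map_smul' c M := by simp [Matrix.smul_apply, Finset.mul_sum]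

lemma total_nonneg {M : Matrix (Fin N) (Fin N) ℝ} (h : ∀ i j, 0 ≤ M i j) :
    0 ≤ total N M := by
  show 0 ≤ ∑ i, ∑ j, M i j
  exact Finset.sum_nonneg fun i _ => Finset.sum_nonneg fun j _ => h i j

lemma list_prod_nonneg (l : List (Matrix (Fin N) (Fin N) ℝ))
    (h : ∀ M ∈ l, ∀ i j, 0 ≤ M i j) : ∀ i j, 0 ≤ l.prod i j := by
  induction l with
  | nil =>
    intro i j
    by_cases hij : i = j <;> simp [Matrix.one_apply, hij]
  | cons a l ih =>
    intro i j
    rw [List.prod_cons, Matrix.mul_apply]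
    refine Finset.sum_nonneg fun k _ => mul_nonneg ?_ ?_
    · exact h a List.mem_cons_self i k
    · exact ih (fun M hM => h M (List.mem_cons_of_mem a hM)) k j

lemma specRad_nonneg (M : Matrix (Fin N) (Fin N) ℝ) : 0 ≤ specRad M := by
  refine Real.sSup_nonneg ?_
  rintro r ⟨μ, -, rfl⟩
  exact norm_nonneg μ

lemma charpoly_eval (D : Matrix (Fin N) (Fin N) ℂ) (μ : ℂ) :
    D.charpoly.eval μ = (Matrix.diagonal (fun _ => μ) - D).det := by
  rw [Matrix.charpoly, show Polynomial.eval μ = Polynomial.evalRingHom μ from rfl,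
    RingHom.map_det]
  congr 1
  ext i j
  rw [RingHom.mapMatrix_apply, Matrix.map_apply]
  by_cases hij : i = j
  · subst hij
    simp [Matrix.charmatrix_apply_eq, Matrix.diagonal_apply_eq, Matrix.sub_apply]
  · simp [Matrix.charmatrix_apply_ne _ _ _ hij, Matrix.diagonal_apply_ne _ hij,
      Matrix.sub_apply]

lemma specRad_le_total (C : Matrix (Fin N) (Fin N) ℝ) (h : ∀ i j, 0 ≤ C i j) :
    specRad C ≤ total N C := by
  refine Real.sSup_le ?_ (total_nonneg h)
  rintro r ⟨μ, hroot, rfl⟩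
  set D := C.map Complex.ofReal with hD
  have hdet : (Matrix.diagonal (fun _ : Fin N => μ) - D).det = 0 := by
    rw [← charpoly_eval]; exact hroot
  obtain ⟨v, hv0, hveq⟩ := (Matrix.exists_mulVec_eq_zero_iff).2 hdet
  have heig : ∀ i, μ * v i = ∑ j, D i j * v j := by
    intro i
    have h0 := congrFun hveq i
    rw [Matrix.sub_mulVec, Pi.sub_apply, Matrix.mulVec_diagonal, Pi.zero_apply, sub_eq_zero] at h0
    rw [h0]
    simp [Matrix.mulVec, dotProduct]
  have hvpos : 0 < ∑ i, ‖v i‖ := by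
    rcases Function.ne_iff.1 hv0 with ⟨i, hi⟩
    have : 0 < ‖v i‖ := by
      simpa using (norm_pos_iff.2 hi)
    refine lt_of_lt_of_le this ?_
    exact Finset.single_le_sum (fun j _ => norm_nonneg (v j)) (Finset.mem_univ i)
  have key : ‖μ‖ * ∑ i, ‖v i‖ ≤ total N C * ∑ i, ‖v i‖ := by
    calc ‖μ‖ * ∑ i, ‖v i‖
        = ∑ i, ‖μ * v i‖ := by
          rw [Finset.mul_sum]; exact Finset.sum_congr rfl fun i _ => (norm_mul _ _).symm
      _ = ∑ i, ‖∑ j, D i j * v j‖ := by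
          exact Finset.sum_congr rfl fun i _ => by rw [heig i]
      _ ≤ ∑ i, ∑ j, ‖D i j * v j‖ := by
          exact Finset.sum_le_sum fun i _ => norm_sum_le _ _
      _ = ∑ j, ∑ i, C i j * ‖v j‖ := by
          rw [Finset.sum_comm]
          refine Finset.sum_congr rfl fun j _ => Finset.sum_congr rfl fun i _ => ?_
          rw [norm_mul]
          congr 1
          simp [hD, Matrix.map_apply, Complex.norm_real, abs_of_nonneg (h i j)]
      _ = ∑ j, (∑ i, C i j) * ‖v j‖ := by
          refine Finset.sum_congr rfl fun j _ => ?_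
          rw [Finset.sum_mul]
      _ ≤ ∑ j, total N C * ‖v j‖ := by
          refine Finset.sum_le_sum fun j _ => ?_
          refine mul_le_mul_of_nonneg_right ?_ (norm_nonneg _)
          have : (∑ i, C i j) ≤ ∑ i, ∑ k, C i k := by
            refine Finset.sum_le_sum fun i _ => ?_
            exact Finset.single_le_sum (fun k _ => h i k) (Finset.mem_univ j)
          exact this
      _ = total N C * ∑ j, ‖v j‖ := by rw [Finset.mul_sum]
  exact le_of_mul_le_mul_right key hvpos

lemma mul_mem_hull {s t : Set (Matrix (Fin N) (Fin N) ℝ)}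
    {x y : Matrix (Fin N) (Fin N) ℝ}
    (hx : x ∈ convexHull ℝ s) (hy : y ∈ convexHull ℝ t) :
    x * y ∈ convexHull ℝ (Set.image2 (· * ·) s t) := by
  have h1 : x * y ∈ convexHull ℝ ((fun z => z * y) '' s) := by
    have := (LinearMap.mulRight ℝ y).image_convexHull s
    rw [show ⇑(LinearMap.mulRight ℝ y) = fun z => z * y from rfl] at this
    rw [← this]
    exact ⟨x, hx, rfl⟩
  refine convexHull_min ?_ (convex_convexHull ℝ _) h1
  rintro _ ⟨b, hb, rfl⟩
  have h2 : b * y ∈ convexHull ℝ ((fun z => b * z) '' t) := by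
    have := (LinearMap.mulLeft ℝ b).image_convexHull t
    rw [show ⇑(LinearMap.mulLeft ℝ b) = fun z => b * z from rfl] at this
    rw [← this]
    exact ⟨y, hy, rfl⟩
  refine convexHull_mono ?_ h2
  rintro _ ⟨c, hc, rfl⟩
  exact ⟨b, hb, c, hc, rfl⟩

lemma listprod_mem_hull (s : Set (Matrix (Fin N) (Fin N) ℝ)) :
    ∀ l : List (Matrix (Fin N) (Fin N) ℝ), (∀ M ∈ l, M ∈ convexHull ℝ s) →
      l.prod ∈ convexHull ℝ
        {P | ∃ m : List (Matrix (Fin N) (Fin N) ℝ),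
          m.length = l.length ∧ (∀ M ∈ m, M ∈ s) ∧ P = m.prod} := by
  intro l
  induction l with
  | nil =>
    intro _
    exact subset_convexHull ℝ _ ⟨[], rfl, by simp, rfl⟩
  | cons a l ih =>
    intro hmem
    rw [List.prod_cons]
    have ha : a ∈ convexHull ℝ s := hmem a List.mem_cons_self
    have hl := ih fun M hM => hmem M (List.mem_cons_of_mem a hM)
    have := mul_mem_hull ha hl
    refine convexHull_mono ?_ this
    rintro _ ⟨b, hb, P, ⟨m, hmlen, hms, rfl⟩, rfl⟩
    exact ⟨b :: m, by simp [hmlen], by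
      intro M hM
      rcases List.mem_cons.1 hM with h | h
      · exact h ▸ hb
      · exact hms M h, (List.prod_cons).symm⟩

end Stmt16Aux

theorem stmt_16 {N : ℕ} (hN : 0 < N) (S : Set (Matrix (Fin N) (Fin N) ℝ))
    (hb : ∃ C, ∀ B ∈ S, ∀ i j, |B i j| ≤ C)
    (hnn : ∀ B ∈ S, ∀ i j, 0 ≤ B i j)
    (n : ℕ) (hn : 1 ≤ n) (A : Fin n → Matrix (Fin N) (Fin N) ℝ)
    (hA : ∀ i, A i ∈ convexHull ℝ S) :
    (1 / (N : ℝ)) *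
        sInf {r : ℝ | ∃ B : Fin n → Matrix (Fin N) (Fin N) ℝ,
          (∀ i, B i ∈ S) ∧ r = specRad ((List.ofFn B).reverse.prod)}
      ≤ l1OpNorm ((List.ofFn A).reverse.prod) := by
  classical
  set T : Set ℝ := {r : ℝ | ∃ B : Fin n → Matrix (Fin N) (Fin N) ℝ,
      (∀ i, B i ∈ S) ∧ r = specRad ((List.ofFn B).reverse.prod)} with hT
  set c : ℝ := sInf T with hc
  have hbdd : BddBelow T := by
    refine ⟨0, ?_⟩
    rintro r ⟨B, hB, rfl⟩
    exact Stmt16Aux.specRad_nonneg _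
  set P := (List.ofFn A).reverse.prod with hP
  -- Step 1: c ≤ total P
  have hstep1 : c ≤ Stmt16Aux.total N P := by
    have hmem : ∀ M ∈ (List.ofFn A).reverse, M ∈ convexHull ℝ S := by
      intro M hM
      rw [List.mem_reverse, List.mem_ofFn] at hM
      rcases hM with ⟨i, rfl⟩
      exact hA i
    have hprod := Stmt16Aux.listprod_mem_hull S (List.ofFn A).reverse hmem
    have hlen : ((List.ofFn A).reverse).length = n := by simp
    have hsub : {Q | ∃ m : List (Matrix (Fin N) (Fin N) ℝ),
          m.length = ((List.ofFn A).reverse).length ∧ (∀ M ∈ m, M ∈ S) ∧ Q = m.prod}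
        ⊆ {M | c ≤ Stmt16Aux.total N M} := by
      rintro _ ⟨m, hmlen, hms, rfl⟩
      rw [hlen] at hmlen
      -- build B : Fin n → Mat with List.ofFn B = m.reverse
      have hrlen : m.reverse.length = n := by simp [hmlen]
      obtain ⟨B, hB⟩ : ∃ B : Fin n → Matrix (Fin N) (Fin N) ℝ,
          List.ofFn B = m.reverse := by
        subst hrlen
        exact ⟨m.reverse.get, List.ofFn_get m.reverse⟩
      have hBmem : ∀ i, B i ∈ S := by
        intro i
        have : B i ∈ List.ofFn B := (List.mem_ofFn).2 ⟨i, rfl⟩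
        rw [hB, List.mem_reverse] at this
        exact hms _ this
      have hprodeq : (List.ofFn B).reverse.prod = m.prod := by
        rw [hB, List.reverse_reverse]
      have h1 : c ≤ specRad m.prod := by
        refine csInf_le hbdd ?_
        exact ⟨B, hBmem, by rw [hprodeq]⟩
      have h2 : specRad m.prod ≤ Stmt16Aux.total N m.prod := by
        refine Stmt16Aux.specRad_le_total _ ?_
        exact Stmt16Aux.list_prod_nonneg m fun M hM => hnn M (hms M hM)
      exact le_trans h1 h2
    have hconv : Convex ℝ {M : Matrix (Fin N) (Fin N) ℝ | c ≤ Stmt16Aux.total N M} :=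
      convex_halfSpace_ge (Stmt16Aux.total N).isLinear c
    exact convexHull_min hsub hconv hprod
  -- Step 2: total P ≤ N * l1OpNorm P
  have hstep2 : Stmt16Aux.total N P ≤ (N : ℝ) * l1OpNorm P := by
    have hbddA : BddAbove {r : ℝ | ∃ j, r = ∑ i, |P i j|} := by
      have : {r : ℝ | ∃ j, r = ∑ i, |P i j|} = Set.range fun j => ∑ i, |P i j| := by
        ext r; simp [Set.mem_setOf_eq, Set.mem_range, eq_comm]
      rw [this]
      exact (Set.finite_range _).bddAbove
    have hcol : ∀ j, ∑ i, |P i j| ≤ l1OpNorm P := fun j =>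
      le_csSup hbddA ⟨j, rfl⟩
    have : Stmt16Aux.total N P = ∑ i, ∑ j, P i j := rfl
    rw [this, show (∑ i, ∑ j, P i j) = ∑ j, ∑ i, P i j from Finset.sum_comm]
    calc ∑ j, ∑ i, P i j ≤ ∑ j : Fin N, ∑ i, |P i j| := by
          refine Finset.sum_le_sum fun j _ => Finset.sum_le_sum fun i _ => le_abs_self _
      _ ≤ ∑ _j : Fin N, l1OpNorm P := Finset.sum_le_sum fun j _ => hcol j
      _ = (N : ℝ) * l1OpNorm P := by
          rw [Finset.sum_const, Finset.card_univ, Fintype.card_fin, nsmul_eq_mul]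
  have hNpos : (0 : ℝ) < N := by exact_mod_cast hN
  rw [one_div, inv_mul_le_iff₀ hNpos]
  exact le_trans hstep1 hstep2
end
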